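/- arXiv:2112.10856 — 15 statements merged into one kernel-verified Lean document; each statement's English description precedes it below -/
import Mathlib

section
/- Let A_1,...,A_K be bounded operators from H1 to H2 with closed range such that R(A_k) ⊆ N(A_{k'}*) and R(A_k*) ⊆ N(A_{k'}) for all k ≠ k'. Then the range of the sum ∑_{k=1}^K A_k equals the orthogonal direct sum of the ranges R(A_1) ⊕ ... ⊕ R(A_K). -/
noncomputable section
open ContinuousLinearMap
open scoped InnerProductSpace

/-- `X` is the Moore–Penrose inverse of `A`: the four Penrose equations. -/
def IsMPInv {H₁ H₂ : Type*} [NormedAddCommGroup H₁] [InnerProductSpace ℂ H₁] [CompleteSpace H₁]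
    [NormedAddCommGroup H₂] [InnerProductSpace ℂ H₂] [CompleteSpace H₂]
    (A : H₁ →L[ℂ] H₂) (X : H₂ →L[ℂ] H₁) : Prop :=
  A ∘L X ∘L A = A ∧ X ∘L A ∘L X = X ∧
    adjoint (A ∘L X) = A ∘L X ∧ adjoint (X ∘L A) = X ∘L A

variable {H₁ H₂ : Type*} [NormedAddCommGroup H₁] [InnerProductSpace ℂ H₁] [CompleteSpace H₁]
    [NormedAddCommGroup H₂] [InnerProductSpace ℂ H₂] [CompleteSpace H₂]

lemma ker_eq_ortho_range_adjoint (B : H₁ →L[ℂ] H₂) :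
    LinearMap.ker (B : H₁ →ₗ[ℂ] H₂) = (LinearMap.range ((adjoint B : H₂ →L[ℂ] H₁) : H₂ →ₗ[ℂ] H₁))ᗮ := by
  ext x
  simp only [LinearMap.mem_ker, Submodule.mem_orthogonal, ContinuousLinearMap.coe_coe]
  constructor
  · rintro h _ ⟨y, rfl⟩
    rw [ContinuousLinearMap.coe_coe, adjoint_inner_left, h, inner_zero_right]
  · intro h
    have h2 : ⟪B x, B x⟫_ℂ = 0 := by
      rw [← adjoint_inner_left]
      exact h _ ⟨B x, rfl⟩
    exact inner_self_eq_zero.mp h2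

theorem stmt1 {K : ℕ} (A : Fin K → (H₁ →L[ℂ] H₂))
    (hclosed : ∀ k, IsClosed (LinearMap.range (A k : H₁ →ₗ[ℂ] H₂) : Set H₂))
    (horth1 : ∀ k k', k ≠ k' → LinearMap.range (A k : H₁ →ₗ[ℂ] H₂) ≤ LinearMap.ker ((adjoint (A k') : H₂ →L[ℂ] H₁) : H₂ →ₗ[ℂ] H₁))
    (horth2 : ∀ k k', k ≠ k' → LinearMap.range ((adjoint (A k) : H₂ →L[ℂ] H₁) : H₂ →ₗ[ℂ] H₁) ≤ LinearMap.ker (A k' : H₁ →ₗ[ℂ] H₂)) :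
    (∀ k k', k ≠ k' → ∀ x ∈ LinearMap.range (A k : H₁ →ₗ[ℂ] H₂), ∀ y ∈ LinearMap.range (A k' : H₁ →ₗ[ℂ] H₂),
      ⟪x, y⟫_ℂ = 0) ∧
    LinearMap.range ((∑ k, A k : H₁ →L[ℂ] H₂) : H₁ →ₗ[ℂ] H₂) = ⨆ k, LinearMap.range (A k : H₁ →ₗ[ℂ] H₂) := by
  constructor
  · rintro k k' hkk' x ⟨u, rfl⟩ y hy
    have hy0 : adjoint (A k) y = 0 := horth1 k' k (Ne.symm hkk') hy
    rw [ContinuousLinearMap.coe_coe, ← adjoint_inner_right, hy0, inner_zero_right]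
  · apply le_antisymm
    · rintro _ ⟨x, rfl⟩
      rw [ContinuousLinearMap.coe_coe, ContinuousLinearMap.sum_apply]
      exact Submodule.sum_mem _ fun k _ =>
        Submodule.mem_iSup_of_mem k ⟨x, rfl⟩
    · refine iSup_le fun k => ?_
      rintro _ ⟨x, rfl⟩
      haveI : CompleteSpace (LinearMap.ker (A k : H₁ →ₗ[ℂ] H₂)) :=
        (ContinuousLinearMap.isClosed_ker (A k)).completeSpace_coe
      set z : H₁ := x - (Submodule.orthogonalProjectionOnto (LinearMap.ker (A k : H₁ →ₗ[ℂ] H₂)) x : H₁) with hz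
      have hzperp : z ∈ (LinearMap.ker (A k : H₁ →ₗ[ℂ] H₂))ᗮ :=
        Submodule.sub_starProjection_mem_orthogonal x
      have hAkz : A k z = A k x := by
        have : A k ((Submodule.orthogonalProjectionOnto (LinearMap.ker (A k : H₁ →ₗ[ℂ] H₂)) x : H₁)) = 0 :=
          (Submodule.orthogonalProjectionOnto (LinearMap.ker (A k : H₁ →ₗ[ℂ] H₂)) x).2
        simp [hz, map_sub, this, ← Submodule.coe_orthogonalProjectionOnto_apply]
      have hker : ∀ k', k ≠ k' → A k' z = 0 := by
        intro k' hkk'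
        have h1 : (LinearMap.ker (A k : H₁ →ₗ[ℂ] H₂))ᗮ ≤ LinearMap.ker (A k' : H₁ →ₗ[ℂ] H₂) := by
          rw [ker_eq_ortho_range_adjoint (A k),
            Submodule.orthogonal_orthogonal_eq_closure]
          exact Submodule.topologicalClosure_minimal _ (horth2 k k' hkk')
            (ContinuousLinearMap.isClosed_ker (A k'))
        exact h1 hzperp
      refine ⟨z, ?_⟩
      rw [ContinuousLinearMap.coe_coe, ContinuousLinearMap.sum_apply]
      rw [Finset.sum_eq_single k (fun k' _ h => hker k' (Ne.symm h))
        (fun h => absurd (Finset.mem_univ k) h)]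
      exact hAkz
end
end

section
/- Let A_1,...,A_K be bounded operators from H1 to H2 with closed range such that R(A_k) ⊆ N(A_{k'}*) and R(A_k*) ⊆ N(A_{k'}) for all k ≠ k'. Then ∑_{k=1}^K A_k has closed range and (∑_{k=1}^K A_k)† = ∑_{k=1}^K A_k†. -/
noncomputable section
open ContinuousLinearMap
open scoped InnerProductSpace

variable {H₁ H₂ : Type*} [NormedAddCommGroup H₁] [InnerProductSpace ℂ H₁] [CompleteSpace H₁]
    [NormedAddCommGroup H₂] [InnerProductSpace ℂ H₂] [CompleteSpace H₂]

theorem stmt3 {K : ℕ} (A : Fin K → (H₁ →L[ℂ] H₂)) (B : Fin K → (H₂ →L[ℂ] H₁))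
    (hclosed : ∀ k, IsClosed (LinearMap.range (A k : H₁ →ₗ[ℂ] H₂) : Set H₂))
    (horth1 : ∀ k k', k ≠ k' → LinearMap.range (A k : H₁ →ₗ[ℂ] H₂) ≤ LinearMap.ker (adjoint (A k') : H₂ →ₗ[ℂ] H₁))
    (horth2 : ∀ k k', k ≠ k' → LinearMap.range (adjoint (A k) : H₂ →ₗ[ℂ] H₁) ≤ LinearMap.ker (A k' : H₁ →ₗ[ℂ] H₂))
    (hMP : ∀ k, IsMPInv (A k) (B k)) :
    IsClosed (LinearMap.range ((∑ k, A k : H₁ →L[ℂ] H₂) : H₁ →ₗ[ℂ] H₂) : Set H₂) ∧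
    IsMPInv (∑ k, A k) (∑ k, B k) := by
  -- B k factors through adjoint (A k) on the left
  have hB : ∀ k, (adjoint (A k) ∘L adjoint (B k)) ∘L B k = B k := by
    intro k
    obtain ⟨p1, p2, p3, p4⟩ := hMP k
    rw [← adjoint_comp, p4, comp_assoc]
    exact p2
  have hB' : ∀ k, (B k ∘L adjoint (B k)) ∘L adjoint (A k) = B k := by
    intro k
    obtain ⟨p1, p2, p3, p4⟩ := hMP k
    rw [comp_assoc, ← adjoint_comp, p3, ← comp_assoc]
    exact p2
  have hBrange : ∀ k x, B k x ∈ LinearMap.range (adjoint (A k) : H₂ →ₗ[ℂ] H₁) := by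
    intro k x
    have h := congrArg (fun f : H₂ →L[ℂ] H₁ => f x) (hB k)
    simp only [comp_apply] at h
    exact ⟨_, h⟩
  -- cross vanishing
  have hAB : ∀ k k' x, k ≠ k' → A k (B k' x) = 0 := by
    intro k k' x h
    exact horth2 k' k h.symm (hBrange k' x)
  have hBA : ∀ k k' x, k ≠ k' → B k (A k' x) = 0 := by
    intro k k' x h
    have h0 : adjoint (A k) (A k' x) = 0 := horth1 k' k h.symm ⟨x, rfl⟩
    have h1 := congrArg (fun f : H₂ →L[ℂ] H₁ => f (A k' x)) (hB' k)
    simp only [comp_apply, h0, map_zero] at h1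
    exact h1.symm
  set S := ∑ k, A k with hS
  set T := ∑ k, B k with hT
  -- diagonal collapse
  have hTSx : ∀ x, T (S x) = ∑ k, B k (A k x) := by
    intro x
    simp only [hS, hT, sum_apply, map_sum]
    rw [Finset.sum_comm]
    refine Finset.sum_congr rfl fun k _ => ?_
    exact Finset.sum_eq_single k (fun j _ hj => hBA k j _ hj.symm) (by simp)
  have hSTx : ∀ x, S (T x) = ∑ k, A k (B k x) := by
    intro x
    simp only [hS, hT, sum_apply, map_sum]
    rw [Finset.sum_comm]
    refine Finset.sum_congr rfl fun k _ => ?_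
    exact Finset.sum_eq_single k (fun j _ hj => hAB k j _ hj.symm) (by simp)
  have hST : S ∘L T = ∑ k, A k ∘L B k := by
    ext x; simpa using hSTx x
  have hTS : T ∘L S = ∑ k, B k ∘L A k := by
    ext x; simpa using hTSx x
  -- Penrose 1 : S T S = S
  have e1 : S ∘L T ∘L S = S := by
    ext x
    simp only [comp_apply]
    rw [hTSx x, map_sum]
    have : ∀ k, S (B k (A k x)) = A k (B k (A k x)) := by
      intro k
      simp only [hS, sum_apply]
      exact Finset.sum_eq_single k (fun j _ hj => hAB j k _ hj) (by simp)
    calc ∑ k, S (B k (A k x))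
        = ∑ k, A k (B k (A k x)) := Finset.sum_congr rfl fun k _ => this k
      _ = ∑ k, A k x := Finset.sum_congr rfl fun k _ => by
            have h := congrArg (fun f : H₁ →L[ℂ] H₂ => f x) (hMP k).1
            simpa using h
      _ = S x := by simp [hS, sum_apply]
  -- Penrose 2 : T S T = T
  have e2 : T ∘L S ∘L T = T := by
    ext x
    simp only [comp_apply]
    rw [hSTx x, map_sum]
    have hdiag : ∀ k, T (A k (B k x)) = B k (A k (B k x)) := by
      intro k
      simp only [hT, sum_apply]
      exact Finset.sum_eq_single k (fun j _ hj => hBA j k _ hj) (by simp)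
    calc ∑ k, T (A k (B k x))
        = ∑ k, B k (A k (B k x)) := Finset.sum_congr rfl fun k _ => hdiag k
      _ = ∑ k, B k x := Finset.sum_congr rfl fun k _ => by
            have h := congrArg (fun f : H₂ →L[ℂ] H₁ => f x) (hMP k).2.1
            simpa using h
      _ = T x := by simp [hT, sum_apply]
  -- Penrose 3 & 4 : self-adjointness
  have e3 : adjoint (S ∘L T) = S ∘L T := by
    rw [hST, map_sum]
    exact Finset.sum_congr rfl fun k _ => (hMP k).2.2.1
  have e4 : adjoint (T ∘L S) = T ∘L S := by
    rw [hTS, map_sum]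
    exact Finset.sum_congr rfl fun k _ => (hMP k).2.2.2
  -- closed range
  have hPidem : ∀ x, S (T (S (T x))) = S (T x) := by
    intro x
    have h := congrArg (fun f : H₁ →L[ℂ] H₂ => f (T x)) e1
    simpa using h
  have hrange : (LinearMap.range (S : H₁ →ₗ[ℂ] H₂) : Set H₂) = {x | S (T x) = x} := by
    ext x
    constructor
    · rintro ⟨y, rfl⟩
      have h := congrArg (fun f : H₁ →L[ℂ] H₂ => f y) e1
      simpa using h
    · intro hx
      exact ⟨T x, hx⟩
  refine ⟨?_, e1, e2, e3, e4⟩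
  rw [hrange]
  have : {x : H₂ | S (T x) = x} = (fun x => S (T x) - x) ⁻¹' {0} := by
    ext x; simp [sub_eq_zero]
  rw [this]
  exact IsClosed.preimage ((S.comp T).continuous.sub continuous_id) isClosed_singleton
end
end

section
/- Let A_1,...,A_K be bounded operators from H1 to H2 with closed range such that R(A_k) ⊆ N(A_{k'}*) and R(A_k*) ⊆ N(A_{k'}) for all k ≠ k'. Then for each k_0, the operator (∑_{k=1}^K A_k)† is a {1,3,4}-inverse of A_{k_0}, i.e., setting X = (∑ A_k)†, one has A_{k_0} X A_{k_0} = A_{k_0}, (A_{k_0} X)* = A_{k_0} X and (X A_{k_0})* = X A_{k_0}. -/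
noncomputable section
open ContinuousLinearMap
open scoped InnerProductSpace

variable {H₁ H₂ : Type*} [NormedAddCommGroup H₁] [InnerProductSpace ℂ H₁] [CompleteSpace H₁]
    [NormedAddCommGroup H₂] [InnerProductSpace ℂ H₂] [CompleteSpace H₂]

set_option maxHeartbeats 1000000 in
theorem stmt4 {K : ℕ} (A : Fin K → (H₁ →L[ℂ] H₂)) (X : H₂ →L[ℂ] H₁)
    (hclosed : ∀ k, IsClosed (LinearMap.range (A k : H₁ →ₗ[ℂ] H₂) : Set H₂))
    (horth1 : ∀ k k', k ≠ k' → LinearMap.range (A k : H₁ →ₗ[ℂ] H₂) ≤ LinearMap.ker (adjoint (A k') : H₂ →ₗ[ℂ] H₁))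
    (horth2 : ∀ k k', k ≠ k' → LinearMap.range (adjoint (A k) : H₂ →ₗ[ℂ] H₁) ≤ LinearMap.ker (A k' : H₁ →ₗ[ℂ] H₂))
    (hX : IsMPInv (∑ k, A k) X) :
    ∀ k₀, A k₀ ∘L X ∘L A k₀ = A k₀ ∧
      adjoint (A k₀ ∘L X) = A k₀ ∘L X ∧ adjoint (X ∘L A k₀) = X ∘L A k₀ := by
  classical
  set S : H₁ →L[ℂ] H₂ := ∑ k, A k with hSdef
  obtain ⟨h1, h2, h3, h4⟩ := hX
  have orth1 : ∀ j k, j ≠ k → adjoint (A k) ∘L A j = 0 := by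
    intro j k hjk
    ext x
    have : A j x ∈ LinearMap.ker (adjoint (A k) : H₂ →ₗ[ℂ] H₁) := horth1 j k hjk ⟨x, rfl⟩
    simpa using this
  have orth2 : ∀ j k, j ≠ k → A k ∘L adjoint (A j) = 0 := by
    intro j k hjk
    ext x
    have : adjoint (A j) x ∈ LinearMap.ker (A k : H₁ →ₗ[ℂ] H₂) := horth2 j k hjk ⟨x, rfl⟩
    simpa using this
  have AS : ∀ k, adjoint (A k) ∘L S = adjoint (A k) ∘L A k := by
    intro k
    ext x
    simp only [comp_apply, hSdef, ContinuousLinearMap.sum_apply, map_sum]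
    rw [Finset.sum_eq_single k]
    · intro j _ hj
      simpa using ContinuousLinearMap.ext_iff.mp (orth1 j k hj) x
    · intro h; exact absurd (Finset.mem_univ k) h
  have SA : ∀ k, S ∘L adjoint (A k) = A k ∘L adjoint (A k) := by
    intro k
    ext x
    simp only [comp_apply, hSdef, ContinuousLinearMap.sum_apply]
    rw [Finset.sum_eq_single k]
    · intro j _ hj
      simpa using ContinuousLinearMap.ext_iff.mp (orth2 k j hj.symm) x
    · intro h; exact absurd (Finset.mem_univ k) h
  have fixP : ∀ w, S (X (S w)) = S w := by
    intro w
    conv_rhs => rw [← h1]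
    simp
  have fixQ : ∀ w, X (S (adjoint S w)) = adjoint S w := by
    intro w
    have : (X ∘L S) ∘L adjoint S = adjoint S := by
      conv_rhs => rw [← h1]
      rw [adjoint_comp, h4]
    simpa using ContinuousLinearMap.ext_iff.mp this w
  have hP : ∀ k, S ∘L (X ∘L A k) = A k := by
    intro k
    ext y
    haveI : CompleteSpace ((LinearMap.range (adjoint (A k) : H₂ →ₗ[ℂ] H₁)).topologicalClosure) :=
      (Submodule.isClosed_topologicalClosure _).completeSpace_coe
    obtain ⟨u, hu, w, hw, rfl⟩ :=
      (LinearMap.range (adjoint (A k) : H₂ →ₗ[ℂ] H₁)).topologicalClosure.exists_add_mem_mem_orthogonal y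
    have hAkw : A k w = 0 := by
      apply ext_inner_left ℂ
      intro z
      rw [← ContinuousLinearMap.adjoint_inner_left]
      simpa using hw _ (Submodule.le_topologicalClosure _ ⟨z, rfl⟩)
    have hju : ∀ j, j ≠ k → A j u = 0 := by
      intro j hj
      have hle : (LinearMap.range (adjoint (A k) : H₂ →ₗ[ℂ] H₁)).topologicalClosure ≤ LinearMap.ker (A j : H₁ →ₗ[ℂ] H₂) :=
        Submodule.topologicalClosure_minimal _ (horth2 k j (fun h => hj h.symm))
          (isClosed_ker (A j))
      simpa using hle hu
    have hSu : S u = A k u := by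
      simp only [hSdef, ContinuousLinearMap.sum_apply]
      rw [Finset.sum_eq_single k]
      · intro j _ hj; exact hju j hj
      · intro h; exact absurd (Finset.mem_univ k) h
    have hval : A k (u + w) = S u := by simp [hAkw, hSu]
    simp only [comp_apply, hval, fixP]
  have hQ : ∀ k, (X ∘L S) ∘L adjoint (A k) = adjoint (A k) := by
    intro k
    ext y
    haveI : CompleteSpace ((LinearMap.range (A k : H₁ →ₗ[ℂ] H₂)).topologicalClosure) :=
      (Submodule.isClosed_topologicalClosure _).completeSpace_coe
    obtain ⟨u, hu, w, hw, rfl⟩ :=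
      (LinearMap.range (A k : H₁ →ₗ[ℂ] H₂)).topologicalClosure.exists_add_mem_mem_orthogonal y
    have hAkw : adjoint (A k) w = 0 := by
      apply ext_inner_left ℂ
      intro z
      rw [← ContinuousLinearMap.adjoint_inner_left, adjoint_adjoint]
      simpa using hw _ (Submodule.le_topologicalClosure _ ⟨z, rfl⟩)
    have hju : ∀ j, j ≠ k → adjoint (A j) u = 0 := by
      intro j hj
      have hle : (LinearMap.range (A k : H₁ →ₗ[ℂ] H₂)).topologicalClosure ≤ LinearMap.ker (adjoint (A j) : H₂ →ₗ[ℂ] H₁) :=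
        Submodule.topologicalClosure_minimal _ (horth1 k j (fun h => hj h.symm))
          (isClosed_ker (adjoint (A j)))
      simpa using hle hu
    have hSadj : adjoint S = ∑ k, adjoint (A k) := by
      simp [hSdef, map_sum]
    have hSu : adjoint S u = adjoint (A k) u := by
      rw [hSadj]
      simp only [ContinuousLinearMap.sum_apply]
      rw [Finset.sum_eq_single k]
      · intro j _ hj; exact hju j hj
      · intro h; exact absurd (Finset.mem_univ k) h
    have hval : adjoint (A k) (u + w) = adjoint S u := by simp [hAkw, hSu]
    simp only [comp_apply, hval, fixQ]
  have hP' : ∀ k, adjoint (A k) ∘L (S ∘L X) = adjoint (A k) := by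
    intro k
    have h := congrArg adjoint (hP k)
    rw [adjoint_comp, adjoint_comp, comp_assoc, ← adjoint_comp, h3] at h
    exact h
  have hQ' : ∀ k, A k ∘L (X ∘L S) = A k := by
    intro k
    have h := congrArg adjoint (hQ k)
    rw [adjoint_comp, adjoint_adjoint, h4] at h
    exact h
  have selfP : ∀ k, adjoint (A k ∘L X) = A k ∘L X := by
    intro k
    have key : adjoint (A k ∘L X) = adjoint (A k ∘L X) ∘L (A k ∘L X) := by
      calc adjoint (A k ∘L X) = adjoint X ∘L adjoint (A k) := adjoint_comp _ _
        _ = adjoint X ∘L (adjoint (A k) ∘L (S ∘L X)) := by rw [hP' k]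
        _ = (adjoint X ∘L (adjoint (A k) ∘L S)) ∘L X := by
            simp only [comp_assoc]
        _ = (adjoint X ∘L (adjoint (A k) ∘L A k)) ∘L X := by rw [AS k]
        _ = (adjoint X ∘L adjoint (A k)) ∘L (A k ∘L X) := by
            simp only [comp_assoc]
        _ = adjoint (A k ∘L X) ∘L (A k ∘L X) := by rw [← adjoint_comp]
    have selfadj : adjoint (adjoint (A k ∘L X) ∘L (A k ∘L X))
        = adjoint (A k ∘L X) ∘L (A k ∘L X) := by
      rw [adjoint_comp, adjoint_adjoint]
    calc adjoint (A k ∘L X) = adjoint (A k ∘L X) ∘L (A k ∘L X) := key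
      _ = adjoint (adjoint (A k ∘L X) ∘L (A k ∘L X)) := selfadj.symm
      _ = adjoint (adjoint (A k ∘L X)) := by rw [← key]
      _ = A k ∘L X := adjoint_adjoint _
  have selfQ : ∀ k, adjoint (X ∘L A k) = X ∘L A k := by
    intro k
    have key : adjoint (X ∘L A k) = (X ∘L A k) ∘L adjoint (X ∘L A k) := by
      calc adjoint (X ∘L A k) = adjoint (A k) ∘L adjoint X := adjoint_comp _ _
        _ = ((X ∘L S) ∘L adjoint (A k)) ∘L adjoint X := by rw [hQ k]
        _ = (X ∘L (S ∘L adjoint (A k))) ∘L adjoint X := by simp only [comp_assoc]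
        _ = (X ∘L (A k ∘L adjoint (A k))) ∘L adjoint X := by rw [SA k]
        _ = (X ∘L A k) ∘L (adjoint (A k) ∘L adjoint X) := by
            simp only [comp_assoc]
        _ = (X ∘L A k) ∘L adjoint (X ∘L A k) := by rw [← adjoint_comp]
    have selfadj : adjoint ((X ∘L A k) ∘L adjoint (X ∘L A k))
        = (X ∘L A k) ∘L adjoint (X ∘L A k) := by
      rw [adjoint_comp, adjoint_adjoint]
    calc adjoint (X ∘L A k) = (X ∘L A k) ∘L adjoint (X ∘L A k) := key
      _ = adjoint ((X ∘L A k) ∘L adjoint (X ∘L A k)) := selfadj.symm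
      _ = adjoint (adjoint (X ∘L A k)) := by rw [← key]
      _ = X ∘L A k := adjoint_adjoint _
  have cross : ∀ j k, j ≠ k → A j ∘L (X ∘L A k) = 0 := by
    intro j k hjk
    have hPP : (A j ∘L X) ∘L (A k ∘L X) = 0 := by
      rw [← selfP j, adjoint_comp]
      calc (adjoint X ∘L adjoint (A j)) ∘L (A k ∘L X)
          = adjoint X ∘L ((adjoint (A j) ∘L A k) ∘L X) := by
            simp only [comp_assoc]
        _ = 0 := by rw [orth1 k j hjk.symm]; simp
    calc A j ∘L (X ∘L A k) = A j ∘L (X ∘L (A k ∘L (X ∘L S))) := by rw [hQ' k]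
      _ = ((A j ∘L X) ∘L (A k ∘L X)) ∘L S := by
          simp only [comp_assoc]
      _ = 0 := by rw [hPP]; simp
  intro k₀
  refine ⟨?_, selfP k₀, selfQ k₀⟩
  have expand : A k₀ ∘L (X ∘L S) = ∑ k, A k₀ ∘L (X ∘L A k) := by
    ext y
    simp [hSdef, ContinuousLinearMap.sum_apply, map_sum]
  have h5 : A k₀ = A k₀ ∘L (X ∘L A k₀) := by
    conv_lhs => rw [← hQ' k₀]
    rw [expand, Finset.sum_eq_single k₀]
    · intro j _ hj
      exact cross k₀ j hj.symm
    · intro h; exact absurd (Finset.mem_univ k₀) h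
  exact h5.symm
end
end

section
/- Let A_1,...,A_K be bounded operators from H1 to H2 with closed range such that R(A_k) ⊆ N(A_{k'}*) and R(A_k*) ⊆ N(A_{k'}) for all k ≠ k'. Then for each k_0, (∑_{k=1}^K A_k* A_k) A_{k_0}† = A_{k_0}* and A_{k_0}† = (∑_{k=1}^K A_k* A_k)† A_{k_0}*. -/
noncomputable section
open ContinuousLinearMap
open scoped InnerProductSpace

set_option maxHeartbeats 1000000

variable {H₁ H₂ : Type*} [NormedAddCommGroup H₁] [InnerProductSpace ℂ H₁] [CompleteSpace H₁]
    [NormedAddCommGroup H₂] [InnerProductSpace ℂ H₂] [CompleteSpace H₂]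

/-- Uniqueness of the Moore–Penrose inverse. -/
lemma mp_unique {A : H₁ →L[ℂ] H₂} {X Y : H₂ →L[ℂ] H₁}
    (hX : IsMPInv A X) (hY : IsMPInv A Y) : X = Y := by
  obtain ⟨hX1, hX2, hX3, hX4⟩ := hX
  obtain ⟨hY1, hY2, hY3, hY4⟩ := hY
  have h1 : X = X ∘L (A ∘L Y) := by
    calc X = X ∘L (A ∘L X) := hX2.symm
    _ = X ∘L adjoint (A ∘L X) := by rw [hX3]
    _ = X ∘L adjoint ((A ∘L (Y ∘L A)) ∘L X) := by rw [hY1]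
    _ = X ∘L adjoint ((A ∘L Y) ∘L (A ∘L X)) := by rfl
    _ = X ∘L (adjoint (A ∘L X) ∘L adjoint (A ∘L Y)) := by rw [adjoint_comp]
    _ = X ∘L ((A ∘L X) ∘L (A ∘L Y)) := by rw [hX3, hY3]
    _ = (X ∘L (A ∘L X)) ∘L (A ∘L Y) := by rfl
    _ = X ∘L (A ∘L Y) := by rw [hX2]
  have h2 : Y = X ∘L (A ∘L Y) := by
    calc Y = (Y ∘L A) ∘L Y := by rw [ContinuousLinearMap.comp_assoc, hY2]
    _ = adjoint (Y ∘L A) ∘L Y := by rw [hY4]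
    _ = adjoint (Y ∘L (A ∘L (X ∘L A))) ∘L Y := by rw [hX1]
    _ = adjoint ((Y ∘L A) ∘L (X ∘L A)) ∘L Y := by rfl
    _ = (adjoint (X ∘L A) ∘L adjoint (Y ∘L A)) ∘L Y := by rw [adjoint_comp]
    _ = ((X ∘L A) ∘L (Y ∘L A)) ∘L Y := by rw [hX4, hY4]
    _ = (X ∘L A) ∘L (Y ∘L (A ∘L Y)) := by rfl
    _ = (X ∘L A) ∘L Y := by rw [hY2]
    _ = X ∘L (A ∘L Y) := by rfl
  rw [h1, ← h2]

theorem stmt5 {K : ℕ} (A : Fin K → (H₁ →L[ℂ] H₂)) (B : Fin K → (H₂ →L[ℂ] H₁))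
    (C : H₁ →L[ℂ] H₁)
    (hclosed : ∀ k, IsClosed (LinearMap.range (A k : H₁ →ₗ[ℂ] H₂) : Set H₂))
    (horth1 : ∀ k k', k ≠ k' → LinearMap.range (A k : H₁ →ₗ[ℂ] H₂) ≤ LinearMap.ker (adjoint (A k') : H₂ →ₗ[ℂ] H₁))
    (horth2 : ∀ k k', k ≠ k' → LinearMap.range (adjoint (A k) : H₂ →ₗ[ℂ] H₁) ≤ LinearMap.ker (A k' : H₁ →ₗ[ℂ] H₂))
    (hMP : ∀ k, IsMPInv (A k) (B k))
    (hC : IsMPInv (∑ k, adjoint (A k) ∘L A k) C) :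
    ∀ k₀, (∑ k, adjoint (A k) ∘L A k) ∘L B k₀ = adjoint (A k₀) ∧
      B k₀ = C ∘L adjoint (A k₀) := by
  set S : H₁ →L[ℂ] H₁ := ∑ k, adjoint (A k) ∘L A k with hS
  obtain ⟨hC1, hC2, hC3, hC4⟩ := hC
  -- S is self-adjoint
  have hSadj : adjoint S = S := by
    rw [hS, map_sum]
    refine Finset.sum_congr rfl fun k _ => ?_
    rw [adjoint_comp, adjoint_adjoint]
  -- C* is also an MP inverse of S, hence C is self-adjoint
  have hCadj : adjoint C = C := by
    refine mp_unique (A := S) ⟨?_, ?_, ?_, ?_⟩ ⟨hC1, hC2, hC3, hC4⟩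
    · calc S ∘L adjoint C ∘L S = adjoint (S ∘L C ∘L S) := by
            rw [adjoint_comp, adjoint_comp, hSadj]; rfl
      _ = adjoint S := by rw [hC1]
      _ = S := hSadj
    · calc adjoint C ∘L S ∘L adjoint C = adjoint (C ∘L S ∘L C) := by
            rw [adjoint_comp, adjoint_comp, hSadj]; rfl
      _ = adjoint C := by rw [hC2]
    · have e : S ∘L adjoint C = adjoint (C ∘L S) := by rw [adjoint_comp, hSadj]
      rw [e, adjoint_adjoint, hC4]
    · have e : adjoint C ∘L S = adjoint (S ∘L C) := by rw [adjoint_comp, hSadj]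
      rw [e, adjoint_adjoint, hC3]
  intro k₀
  obtain ⟨hB1, hB2, hB3, hB4⟩ := hMP k₀
  -- B k₀ factors through adjoint (A k₀)
  have hBfac : B k₀ = adjoint (A k₀) ∘L (adjoint (B k₀) ∘L B k₀) := by
    calc B k₀ = (B k₀ ∘L A k₀) ∘L B k₀ := by rw [ContinuousLinearMap.comp_assoc, hB2]
    _ = adjoint (B k₀ ∘L A k₀) ∘L B k₀ := by rw [hB4]
    _ = (adjoint (A k₀) ∘L adjoint (B k₀)) ∘L B k₀ := by rw [adjoint_comp]
    _ = adjoint (A k₀) ∘L (adjoint (B k₀) ∘L B k₀) := by rfl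
  -- the cross terms vanish
  have hcross : ∀ k, k ≠ k₀ → (adjoint (A k) ∘L A k) ∘L B k₀ = 0 := by
    intro k hk
    have hz : A k ∘L adjoint (A k₀) = 0 := by
      ext x
      exact horth2 k₀ k (fun h => hk h.symm) ⟨x, rfl⟩
    calc (adjoint (A k) ∘L A k) ∘L B k₀
        = adjoint (A k) ∘L ((A k ∘L adjoint (A k₀)) ∘L (adjoint (B k₀) ∘L B k₀)) := by
          conv_lhs => rw [ContinuousLinearMap.comp_assoc, hBfac]
          rfl
    _ = 0 := by rw [hz, zero_comp, comp_zero]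
  -- first claim
  have claim1 : S ∘L B k₀ = adjoint (A k₀) := by
    rw [hS, ContinuousLinearMap.finset_sum_comp]
    rw [Finset.sum_eq_single k₀ (fun k _ hk => hcross k hk) (by simp)]
    calc (adjoint (A k₀) ∘L A k₀) ∘L B k₀
        = adjoint (A k₀) ∘L adjoint (A k₀ ∘L B k₀) := by rw [hB3]; rfl
    _ = adjoint ((A k₀ ∘L B k₀) ∘L A k₀) := (adjoint_comp _ _).symm
    _ = adjoint (A k₀) := by rw [ContinuousLinearMap.comp_assoc, hB1]
  refine ⟨claim1, ?_⟩
  -- S ∘L C fixes range of S, in particular range of adjoint (A k₀)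
  have hfix : S ∘L C ∘L adjoint (A k₀) = adjoint (A k₀) := by
    calc S ∘L C ∘L adjoint (A k₀) = S ∘L C ∘L S ∘L B k₀ := by rw [claim1]
    _ = (S ∘L (C ∘L S)) ∘L B k₀ := by rfl
    _ = S ∘L B k₀ := by rw [hC1]
    _ = adjoint (A k₀) := claim1
  have hCS : C ∘L S = S ∘L C := by
    calc C ∘L S = adjoint (adjoint S ∘L adjoint C) := by
          rw [adjoint_comp, adjoint_adjoint, adjoint_adjoint]
    _ = adjoint (S ∘L C) := by rw [hSadj, hCadj]
    _ = S ∘L C := hC3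
  have key : C ∘L adjoint (A k₀) = B k₀ := by
    calc C ∘L adjoint (A k₀)
        = C ∘L (S ∘L B k₀) := by rw [claim1]
    _ = (C ∘L S) ∘L B k₀ := by rfl
    _ = (S ∘L C) ∘L B k₀ := by rw [hCS]
    _ = (S ∘L C) ∘L (adjoint (A k₀) ∘L (adjoint (B k₀) ∘L B k₀)) := by rw [← hBfac]
    _ = (S ∘L (C ∘L adjoint (A k₀))) ∘L (adjoint (B k₀) ∘L B k₀) := by rfl
    _ = adjoint (A k₀) ∘L (adjoint (B k₀) ∘L B k₀) := by rw [hfix]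
    _ = B k₀ := hBfac.symm
  exact key.symm
end
end

section
/- Let A_1,...,A_K be bounded operators from H1 to H2 with closed range such that R(A_k) ⊆ N(A_{k'}*) and R(A_k*) ⊆ N(A_{k'}) for all k ≠ k', and fix k_0. Then N(∑_{k=1}^K A_k) = {0} if and only if R(A_{k_0}*) = N(∑_{k≠k_0} A_k). -/
noncomputable section
open ContinuousLinearMap
open scoped InnerProductSpace

variable {H₁ H₂ : Type*} [NormedAddCommGroup H₁] [InnerProductSpace ℂ H₁] [CompleteSpace H₁]
    [NormedAddCommGroup H₂] [InnerProductSpace ℂ H₂] [CompleteSpace H₂]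

lemma aux_ker_eq_orth (A : H₁ →L[ℂ] H₂) :
    LinearMap.ker (A : H₁ →ₗ[ℂ] H₂) = (LinearMap.range (adjoint A : H₂ →ₗ[ℂ] H₁))ᗮ := by
  ext x
  simp only [LinearMap.mem_ker, Submodule.mem_orthogonal]
  constructor
  · intro hx u hu
    obtain ⟨y, rfl⟩ := hu
    change ⟪adjoint A y, x⟫_ℂ = 0
    rw [adjoint_inner_left, show A x = 0 from hx, inner_zero_right]
  · intro hx
    have h1 := hx (adjoint A (A x)) (LinearMap.mem_range_self _ _)
    rw [adjoint_inner_left] at h1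
    exact inner_self_eq_zero.mp h1

lemma aux_isClosed_range_adjoint (A : H₁ →L[ℂ] H₂)
    (h : IsClosed (LinearMap.range (A : H₁ →ₗ[ℂ] H₂) : Set H₂)) :
    IsClosed (LinearMap.range (adjoint A : H₂ →ₗ[ℂ] H₁) : Set H₁) := by
  set M := LinearMap.range (A : H₁ →ₗ[ℂ] H₂) with hM
  haveI : CompleteSpace M := h.completeSpace_coe
  set A' : H₁ →L[ℂ] M := A.codRestrict M (fun x => LinearMap.mem_range_self _ x) with hA'
  have hsurj : Function.Surjective A' := by
    rintro ⟨y, hy⟩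
    obtain ⟨x, rfl⟩ := hy
    exact ⟨x, rfl⟩
  obtain ⟨C, Cpos, hC⟩ := A'.exists_preimage_norm_le hsurj
  have hbound : ∀ y : M, ‖y‖ ≤ C * ‖adjoint A' y‖ := by
    intro y
    rcases eq_or_ne y 0 with rfl | hy0
    · simp [mul_nonneg Cpos.le (norm_nonneg _)]
    obtain ⟨x, hfx, hx⟩ := hC y
    have h1 : ‖y‖ * ‖y‖ ≤ (C * ‖y‖) * ‖adjoint A' y‖ := by
      calc ‖y‖ * ‖y‖ = RCLike.re ⟪y, y⟫_ℂ := (inner_self_eq_norm_mul_norm (𝕜 := ℂ) y).symm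
        _ ≤ ‖⟪y, y⟫_ℂ‖ := RCLike.re_le_norm _
        _ = ‖⟪A' x, y⟫_ℂ‖ := by rw [hfx]
        _ = ‖⟪x, adjoint A' y⟫_ℂ‖ := by rw [adjoint_inner_right]
        _ ≤ ‖x‖ * ‖adjoint A' y‖ := norm_inner_le_norm _ _
        _ ≤ (C * ‖y‖) * ‖adjoint A' y‖ := by
            exact mul_le_mul_of_nonneg_right hx (norm_nonneg _)
    have hny : (0:ℝ) < ‖y‖ := norm_pos_iff.mpr hy0
    nlinarith
  have hanti : AntilipschitzWith C.toNNReal (adjoint A') := by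
    apply (adjoint A').antilipschitz_of_bound
    intro y
    rw [Real.coe_toNNReal C Cpos.le]
    exact hbound y
  have hclosed' : IsClosed (Set.range (adjoint A')) :=
    hanti.isClosed_range (adjoint A').uniformContinuous
  have hAeq : adjoint A = adjoint A' ∘L (M.orthogonalProjectionOnto : H₂ →L[ℂ] M) := by
    have h1 : A = M.subtypeL ∘L A' := by ext x; rfl
    rw [h1, adjoint_comp, Submodule.adjoint_subtypeL]
  have hrange : (LinearMap.range (adjoint A : H₂ →ₗ[ℂ] H₁) : Set H₁) = Set.range (adjoint A') := by
    rw [LinearMap.coe_range, hAeq]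
    ext x
    constructor
    · rintro ⟨y, rfl⟩; exact ⟨_, rfl⟩
    · rintro ⟨m, rfl⟩
      exact ⟨(m : H₂), by simp [Submodule.orthogonalProjectionOnto_mem_subspace_eq_self]⟩
  rw [hrange]
  exact hclosed'

theorem stmt6 {K : ℕ} (A : Fin K → (H₁ →L[ℂ] H₂)) (k₀ : Fin K)
    (hclosed : ∀ k, IsClosed (LinearMap.range (A k : H₁ →ₗ[ℂ] H₂) : Set H₂))
    (horth1 : ∀ k k', k ≠ k' → LinearMap.range (A k : H₁ →ₗ[ℂ] H₂) ≤ LinearMap.ker (adjoint (A k') : H₂ →ₗ[ℂ] H₁))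
    (horth2 : ∀ k k', k ≠ k' → LinearMap.range (adjoint (A k) : H₂ →ₗ[ℂ] H₁) ≤ LinearMap.ker (A k' : H₁ →ₗ[ℂ] H₂)) :
    LinearMap.ker ((∑ k, A k : H₁ →L[ℂ] H₂) : H₁ →ₗ[ℂ] H₂) = ⊥ ↔
      LinearMap.range (adjoint (A k₀) : H₂ →ₗ[ℂ] H₁) =
        LinearMap.ker ((∑ k ∈ Finset.univ.erase k₀, A k : H₁ →L[ℂ] H₂) : H₁ →ₗ[ℂ] H₂) := by
  -- pointwise kernel characterization of sums
  have hker : ∀ (s : Finset (Fin K)) (x : H₁),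
      (∑ k ∈ s, A k) x = 0 ↔ ∀ j ∈ s, A j x = 0 := by
    intro s x
    constructor
    · intro hx j hj
      have h0 : ⟪A j x, (∑ k ∈ s, A k) x⟫_ℂ = 0 := by rw [hx, inner_zero_right]
      rw [ContinuousLinearMap.sum_apply, inner_sum] at h0
      have hterm : ∀ k ∈ s, k ≠ j → ⟪A j x, A k x⟫_ℂ = 0 := by
        intro k _ hkj
        have hmem : A j x ∈ LinearMap.ker (adjoint (A k) : H₂ →ₗ[ℂ] H₁) :=
          horth1 j k (fun h => hkj (h.symm)) (LinearMap.mem_range_self _ _)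
        rw [← adjoint_inner_left, show adjoint (A k) (A j x) = 0 from hmem, inner_zero_left]
      rw [Finset.sum_eq_single_of_mem j hj hterm] at h0
      exact inner_self_eq_zero.mp h0
    · intro hx
      rw [ContinuousLinearMap.sum_apply]
      exact Finset.sum_eq_zero fun k hk => hx k hk
  constructor
  · intro hS
    apply le_antisymm
    · intro x hx
      rw [LinearMap.mem_ker, ContinuousLinearMap.coe_coe, hker]
      intro j hj
      have hj' : k₀ ≠ j := fun h => (Finset.mem_erase.mp hj).1 h.symm
      exact horth2 k₀ j hj' hx
    · intro x hx
      set N := LinearMap.range (adjoint (A k₀) : H₂ →ₗ[ℂ] H₁) with hN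
      haveI : CompleteSpace N :=
        (aux_isClosed_range_adjoint (A k₀) (hclosed k₀)).completeSpace_coe
      obtain ⟨u, hu, v, hv, rfl⟩ := N.exists_add_mem_mem_orthogonal x
      have hvker : v ∈ LinearMap.ker (A k₀ : H₁ →ₗ[ℂ] H₂) := by rw [aux_ker_eq_orth]; exact hv
      have hxall : ∀ j ∈ Finset.univ.erase k₀, A j (u + v) = 0 :=
        (hker _ _).mp (LinearMap.mem_ker.mp hx)
      have hv0 : v = 0 := by
        have : v ∈ LinearMap.ker ((∑ k, A k : H₁ →L[ℂ] H₂) : H₁ →ₗ[ℂ] H₂) := by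
          rw [LinearMap.mem_ker, ContinuousLinearMap.coe_coe, hker]
          intro j _
          rcases eq_or_ne j k₀ with rfl | hjk
          · exact LinearMap.mem_ker.mp hvker
          · have hju : A j u = 0 := horth2 k₀ j (fun h => hjk h.symm) hu
            have := hxall j (Finset.mem_erase.mpr ⟨hjk, Finset.mem_univ j⟩)
            rw [map_add, hju, zero_add] at this
            exact this
        rw [hS, Submodule.mem_bot] at this
        exact this
      rw [hv0, add_zero]
      exact hu
  · intro hR
    rw [Submodule.eq_bot_iff]
    intro x hx
    have hxall : ∀ j ∈ (Finset.univ : Finset (Fin K)), A j x = 0 :=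
      (hker _ _).mp (LinearMap.mem_ker.mp hx)
    have hxB : x ∈ LinearMap.ker ((∑ k ∈ Finset.univ.erase k₀, A k : H₁ →L[ℂ] H₂) : H₁ →ₗ[ℂ] H₂) := by
      rw [LinearMap.mem_ker, ContinuousLinearMap.coe_coe, hker]
      intro j hj
      exact hxall j (Finset.mem_univ j)
    rw [← hR] at hxB
    have hxk : x ∈ (LinearMap.range (adjoint (A k₀) : H₂ →ₗ[ℂ] H₁))ᗮ := by
      rw [← aux_ker_eq_orth]
      exact LinearMap.mem_ker.mpr (hxall k₀ (Finset.mem_univ k₀))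
    exact inner_self_eq_zero.mp ((Submodule.mem_orthogonal _ x).mp hxk x hxB)
end
end

section
/- Let A_1,...,A_K be bounded operators from H1 to H2 with closed range such that R(A_k) ⊆ N(A_{k'}*) and R(A_k*) ⊆ N(A_{k'}) for all k ≠ k'. If ∑_{k=1}^K A_k is injective, then ∑_{k=1}^K A_k* A_k is invertible and for each k_0, A_{k_0}† is the unique solution X of the equation (∑_{k=1}^K A_k* A_k) X = A_{k_0}*. -/
noncomputable section
open ContinuousLinearMap
open scoped InnerProductSpace

variable {H₁ H₂ : Type*} [NormedAddCommGroup H₁] [InnerProductSpace ℂ H₁] [CompleteSpace H₁]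
    [NormedAddCommGroup H₂] [InnerProductSpace ℂ H₂] [CompleteSpace H₂]

theorem stmt7 {K : ℕ} (A : Fin K → (H₁ →L[ℂ] H₂)) (B : Fin K → (H₂ →L[ℂ] H₁))
    (hclosed : ∀ k, IsClosed (LinearMap.range (A k : H₁ →ₗ[ℂ] H₂) : Set H₂))
    (horth1 : ∀ k k', k ≠ k' → LinearMap.range (A k : H₁ →ₗ[ℂ] H₂) ≤ LinearMap.ker (adjoint (A k') : H₂ →ₗ[ℂ] H₁))
    (horth2 : ∀ k k', k ≠ k' → LinearMap.range (adjoint (A k) : H₂ →ₗ[ℂ] H₁) ≤ LinearMap.ker (A k' : H₁ →ₗ[ℂ] H₂))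
    (hMP : ∀ k, IsMPInv (A k) (B k))
    (hinj : Function.Injective (∑ k, A k)) :
    IsUnit (∑ k, adjoint (A k) ∘L A k) ∧
    ∀ k₀, ∀ X : H₂ →L[ℂ] H₁,
      (∑ k, adjoint (A k) ∘L A k) ∘L X = adjoint (A k₀) ↔ X = B k₀ := by
  classical
  have hABA : ∀ k, A k ∘L B k ∘L A k = A k := fun k => (hMP k).1
  have hBAB : ∀ k, B k ∘L A k ∘L B k = B k := fun k => (hMP k).2.1
  have hABs : ∀ k, adjoint (A k ∘L B k) = A k ∘L B k := fun k => (hMP k).2.2.1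
  have hBAs : ∀ k, adjoint (B k ∘L A k) = B k ∘L A k := fun k => (hMP k).2.2.2
  -- A k ∘L B k' = 0 for k' ≠ k
  have hAB : ∀ k k', k' ≠ k → A k ∘L B k' = 0 := by
    intro k k' h
    ext x
    have e1 : (B k' ∘L A k') (B k' x) = B k' x := DFunLike.congr_fun (hBAB k') x
    have e2 := DFunLike.congr_fun (hBAs k') (B k' x)
    rw [adjoint_comp] at e2
    have h1 : B k' x = adjoint (A k') (adjoint (B k') (B k' x)) := e1.symm.trans e2.symm
    have h2 : A k (adjoint (A k') (adjoint (B k') (B k' x))) = 0 :=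
      LinearMap.mem_ker.mp (horth2 k' k h (LinearMap.mem_range_self _ _))
    simp only [ContinuousLinearMap.comp_apply, ContinuousLinearMap.zero_apply]
    rw [h1]; exact h2
  -- adjoint (A k) ∘L (A k ∘L B k) = adjoint (A k)
  have hAAB : ∀ k, adjoint (A k) ∘L A k ∘L B k = adjoint (A k) := by
    intro k
    rw [← hABs, ← adjoint_comp, comp_assoc, hABA]
  set S := ∑ k, adjoint (A k) ∘L A k with hSdef
  have hSB : ∀ k₀, S ∘L B k₀ = adjoint (A k₀) := by
    intro k₀
    rw [hSdef, finset_sum_comp]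
    rw [Finset.sum_eq_single k₀]
    · exact hAAB k₀
    · intro k _ hk
      show adjoint (A k) ∘L (A k ∘L B k₀) = 0
      rw [hAB k k₀ (Ne.symm hk), comp_zero]
    · intro h; exact absurd (Finset.mem_univ k₀) h
  set Q := ∑ k, B k ∘L A k with hQdef
  have hQs : adjoint Q = Q := by
    rw [hQdef, map_sum]
    exact Finset.sum_congr rfl fun k _ => hBAs k
  -- each B k ∘L A k is idempotent
  have hPidem : ∀ k, (B k ∘L A k) ∘L (B k ∘L A k) = B k ∘L A k := by
    intro k
    ext x
    exact DFunLike.congr_fun (hBAB k) ((A k) x)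
  -- kernel of Q is trivial, hence Q = 1
  have hAx : ∀ x : H₁, Q x = 0 → ∀ k, A k x = 0 := by
    intro x hx k
    have h1 : (∑ j, ⟪(B j ∘L A j) x, x⟫_ℂ) = 0 := by
      rw [← sum_inner]
      have h : (∑ j, ((B j ∘L A j) x)) = Q x := by
        rw [hQdef, ContinuousLinearMap.sum_apply]
      rw [h, hx, inner_zero_left]
    have h2 : ∀ j, ⟪(B j ∘L A j) x, x⟫_ℂ = (‖(B j ∘L A j) x‖ : ℂ) ^ 2 := by
      intro j
      have hidem : (B j ∘L A j) ((B j ∘L A j) x) = (B j ∘L A j) x :=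
        DFunLike.congr_fun (hPidem j) x
      have hadj := ContinuousLinearMap.adjoint_inner_left (B j ∘L A j) x ((B j ∘L A j) x)
      rw [hBAs j] at hadj
      calc ⟪(B j ∘L A j) x, x⟫_ℂ
          = ⟪(B j ∘L A j) ((B j ∘L A j) x), x⟫_ℂ := by rw [hidem]
        _ = ⟪(B j ∘L A j) x, (B j ∘L A j) x⟫_ℂ := hadj
        _ = (‖(B j ∘L A j) x‖ : ℂ) ^ 2 := inner_self_eq_norm_sq_to_K _
    have h3 : (∑ j, ((‖(B j ∘L A j) x‖ : ℂ)) ^ 2) = 0 := by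
      rw [← h1]
      exact Finset.sum_congr rfl fun j _ => (h2 j).symm
    have h4 : (∑ j, ‖(B j ∘L A j) x‖ ^ 2 : ℝ) = 0 := by
      have hc : ((∑ j, ‖(B j ∘L A j) x‖ ^ 2 : ℝ) : ℂ) = 0 := by push_cast; exact h3
      exact_mod_cast hc
    have h5 : (B k ∘L A k) x = 0 := by
      have hnn : ∀ i ∈ Finset.univ, (0:ℝ) ≤ ‖(B i ∘L A i) x‖ ^ 2 := fun i _ => sq_nonneg _
      have := (Finset.sum_eq_zero_iff_of_nonneg hnn).mp h4 k (Finset.mem_univ k)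
      have := pow_eq_zero_iff (n := 2) (by norm_num) |>.mp this
      exact norm_eq_zero.mp this
    have h6 := DFunLike.congr_fun (hABA k) x
    simp only [ContinuousLinearMap.comp_apply] at h5 h6
    rw [h5, map_zero] at h6
    exact h6.symm
  have hker : ∀ y : H₁, Q y = 0 → y = 0 := by
    intro y hy
    apply hinj
    show (∑ k, ⇑(A k)) y = (∑ k, ⇑(A k)) 0
    simp only [Finset.sum_apply]
    rw [Finset.sum_eq_zero fun k _ => hAx y hy k,
      Finset.sum_eq_zero fun k _ => map_zero (A k)]
  have hQQ : Q ∘L Q = Q := by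
    rw [hQdef, finset_sum_comp]
    refine Finset.sum_congr rfl fun k _ => ?_
    rw [comp_finset_sum, Finset.sum_eq_single k]
    · exact hPidem k
    · intro k' _ hk'
      show B k ∘L ((A k ∘L B k') ∘L A k') = 0
      rw [hAB k k' hk', zero_comp, comp_zero]
    · intro h; exact absurd (Finset.mem_univ k) h
  have hQ1 : Q = 1 := by
    ext x
    have hQx : Q (Q x) = Q x := DFunLike.congr_fun hQQ x
    have h0 : Q (Q x - x) = 0 := by rw [map_sub, hQx, sub_self]
    have h1 := hker _ h0
    rw [sub_eq_zero] at h1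
    simpa using h1
  set C := ∑ k, B k ∘L adjoint (B k) with hCdef
  have hCs : adjoint C = C := by
    rw [hCdef, map_sum]
    refine Finset.sum_congr rfl fun k _ => ?_
    rw [adjoint_comp, adjoint_adjoint]
  have hSs : adjoint S = S := by
    rw [hSdef, map_sum]
    refine Finset.sum_congr rfl fun k _ => ?_
    rw [adjoint_comp, adjoint_adjoint]
  have hSC : S ∘L C = 1 := by
    rw [hSdef, hCdef, finset_sum_comp, ← hQ1, hQdef]
    refine Finset.sum_congr rfl fun k _ => ?_
    rw [comp_finset_sum, Finset.sum_eq_single k]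
    · show (adjoint (A k) ∘L (A k ∘L B k)) ∘L adjoint (B k) = B k ∘L A k
      rw [hAAB k, ← adjoint_comp, hBAs]
    · intro k' _ hk'
      show adjoint (A k) ∘L ((A k ∘L B k') ∘L adjoint (B k')) = 0
      rw [hAB k k' hk', zero_comp, comp_zero]
    · intro h; exact absurd (Finset.mem_univ k) h
  have hCS : C ∘L S = 1 := by
    have h := congrArg ContinuousLinearMap.adjoint hSC
    rw [adjoint_comp, hCs, hSs] at h
    rw [h, one_def, adjoint_id]
  constructor
  · exact isUnit_iff_exists.mpr ⟨C, hSC, hCS⟩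
  · intro k₀ X
    constructor
    · intro h
      calc X = (C ∘L S) ∘L X := by rw [hCS, one_def, id_comp]
        _ = C ∘L (S ∘L X) := rfl
        _ = C ∘L (S ∘L B k₀) := by rw [h, hSB]
        _ = (C ∘L S) ∘L B k₀ := rfl
        _ = B k₀ := by rw [hCS, one_def, id_comp]
    · intro h; rw [h]; exact hSB k₀
end
end

section
/- Let A_1,...,A_K be bounded closed-range operators satisfying R(A_k) ⊆ N(A_{k'}*) and R(A_k*) ⊆ N(A_{k'}) for all k ≠ k', and suppose ∑_{k=1}^K A_k is invertible. Then for each k_0, (∑_{k=1}^K A_k) A_{k_0}† equals the orthogonal projection onto N(∑_{k≠k_0} A_k*), and A_{k_0}† (∑_{k=1}^K A_k) equals the orthogonal projection onto N(∑_{k≠k_0} A_k). -/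
noncomputable section
open ContinuousLinearMap
open scoped InnerProductSpace

variable {H₁ H₂ : Type*} [NormedAddCommGroup H₁] [InnerProductSpace ℂ H₁] [CompleteSpace H₁]
    [NormedAddCommGroup H₂] [InnerProductSpace ℂ H₂] [CompleteSpace H₂]

/-- Adjoint system is also a Moore–Penrose pair. -/
lemma isMPInv_adjoint {A : H₁ →L[ℂ] H₂} {X : H₂ →L[ℂ] H₁} (h : IsMPInv A X) :
    IsMPInv (adjoint A) (adjoint X) := by
  obtain ⟨h1, h2, h3, h4⟩ := h
  have e1 : adjoint A ∘L adjoint X ∘L adjoint A = adjoint A := by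
    rw [← adjoint_comp, ← adjoint_comp]
    exact congrArg adjoint h1
  have e2 : adjoint X ∘L adjoint A ∘L adjoint X = adjoint X := by
    rw [← adjoint_comp, ← adjoint_comp]
    exact congrArg adjoint h2
  have e3 : adjoint A ∘L adjoint X = X ∘L A := by
    rw [← adjoint_comp]; exact h4
  have e4 : adjoint X ∘L adjoint A = A ∘L X := by
    rw [← adjoint_comp]; exact h3
  refine ⟨e1, e2, ?_, ?_⟩
  · rw [e3, h4, ← e3]
  · rw [e4, h3, ← e4]

/-- If `R(A*) ⊆ N(A')` then `A' ∘ B = 0` whenever `B` is the MP inverse of `A`. -/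
lemma comp_MP_zero {A A' : H₁ →L[ℂ] H₂} {X : H₂ →L[ℂ] H₁}
    (h : IsMPInv A X) (horth : LinearMap.range (adjoint A : H₂ →ₗ[ℂ] H₁) ≤ LinearMap.ker (A' : H₁ →ₗ[ℂ] H₂)) :
    A' ∘L X = 0 := by
  obtain ⟨h1, h2, h3, h4⟩ := h
  ext x
  have hx : X x = adjoint A (adjoint X (X x)) := by
    have hxx : (X ∘L A) (X x) = X x := by
      have := congrArg (fun f : H₂ →L[ℂ] H₁ => f x) h2
      simpa [comp_apply] using this
    calc X x = (X ∘L A) (X x) := hxx.symm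
      _ = adjoint (X ∘L A) (X x) := by rw [h4]
      _ = adjoint A (adjoint X (X x)) := by rw [adjoint_comp]; simp [comp_apply]
  have : A' (X x) = 0 := by
    rw [hx]
    exact horth ⟨adjoint X (X x), rfl⟩
  simpa [comp_apply] using this

/-- Main half: `(∑ A_k) ∘ B_{k₀}` is the orthogonal projection onto
`N(∑_{k≠k₀} A_k*)`. -/
lemma main_half {K : ℕ} (A : Fin K → (H₁ →L[ℂ] H₂)) (B : Fin K → (H₂ →L[ℂ] H₁))
    (T : H₂ →L[ℂ] H₁)
    (horth1 : ∀ k k', k ≠ k' → LinearMap.range (A k : H₁ →ₗ[ℂ] H₂) ≤ LinearMap.ker (adjoint (A k') : H₂ →ₗ[ℂ] H₁))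
    (horth2 : ∀ k k', k ≠ k' → LinearMap.range (adjoint (A k) : H₂ →ₗ[ℂ] H₁) ≤ LinearMap.ker (A k' : H₁ →ₗ[ℂ] H₂))
    (hMP : ∀ k, IsMPInv (A k) (B k))
    (hT1 : (∑ k, A k) ∘L T = ContinuousLinearMap.id ℂ H₂) (k₀ : Fin K) :
    (∀ x ∈ LinearMap.ker ((∑ k ∈ Finset.univ.erase k₀, adjoint (A k) : H₂ →L[ℂ] H₁) : H₂ →ₗ[ℂ] H₁),
        ((∑ k, A k) ∘L B k₀) x = x) ∧
    (∀ x ∈ (LinearMap.ker ((∑ k ∈ Finset.univ.erase k₀, adjoint (A k) : H₂ →L[ℂ] H₁) : H₂ →ₗ[ℂ] H₁) : Submodule ℂ H₂)ᗮ,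
        ((∑ k, A k) ∘L B k₀) x = 0) := by
  obtain ⟨h1, h2, h3, h4⟩ := hMP k₀
  set Q : H₂ →L[ℂ] H₂ := A k₀ ∘L B k₀ with hQ
  -- the sum composed with B k₀ equals Q
  have hAB : ∀ k, k ≠ k₀ → A k ∘L B k₀ = 0 := fun k hk =>
    comp_MP_zero (hMP k₀) (horth2 k₀ k (Ne.symm hk))
  have hSB : ∀ x, ((∑ k, A k) ∘L B k₀) x = Q x := by
    intro x
    simp only [comp_apply, ContinuousLinearMap.sum_apply, hQ]
    rw [Finset.sum_eq_single k₀]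
    · intro k _ hk
      have := hAB k hk
      have := congrArg (fun f : H₂ →L[ℂ] H₂ => f x) this
      simpa [comp_apply] using this
    · intro h; exact absurd (Finset.mem_univ k₀) h
  have hQidem : ∀ x, Q (Q x) = Q x := by
    intro x
    have : (A k₀ ∘L B k₀ ∘L A k₀) (B k₀ x) = A k₀ (B k₀ x) := by rw [h1]
    simpa [hQ, comp_apply] using this
  have hQsa : adjoint Q = Q := h3
  -- Q kills A k for k ≠ k₀
  have hQA : ∀ k, k ≠ k₀ → ∀ y, Q (A k y) = 0 := by
    intro k hk y
    have haq : adjoint (A k) ∘L Q = 0 := by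
      ext z
      have : adjoint (A k) (A k₀ (B k₀ z)) = 0 :=
        horth1 k₀ k (Ne.symm hk) ⟨B k₀ z, rfl⟩
      simpa [hQ, comp_apply] using this
    have : Q ∘L A k = 0 := by
      have := congrArg adjoint haq
      rw [adjoint_comp, adjoint_adjoint, hQsa, map_zero] at this
      exact this
    have := congrArg (fun f : H₁ →L[ℂ] H₂ => f y) this
    simpa [comp_apply] using this
  have hQA0 : ∀ y, Q (A k₀ y) = A k₀ y := by
    intro y
    have : (A k₀ ∘L B k₀ ∘L A k₀) y = A k₀ y := by rw [h1]
    simpa [hQ, comp_apply] using this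
  -- range of A k₀ is inside the kernel
  have hrange : LinearMap.range (A k₀ : H₁ →ₗ[ℂ] H₂) ≤
      LinearMap.ker ((∑ k ∈ Finset.univ.erase k₀, adjoint (A k) : H₂ →L[ℂ] H₁) : H₂ →ₗ[ℂ] H₁) := by
    rintro _ ⟨y, rfl⟩
    simp only [LinearMap.mem_ker, ContinuousLinearMap.coe_coe, ContinuousLinearMap.sum_apply]
    refine Finset.sum_eq_zero fun k hk => ?_
    exact horth1 k₀ k (Ne.symm (Finset.ne_of_mem_erase hk)) ⟨y, rfl⟩
  constructor
  · intro x hx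
    rw [hSB]
    have hker : (∑ k ∈ Finset.univ.erase k₀, adjoint (A k)) x = 0 := hx
    -- x = ∑ A k (T x)
    have hx1 : ∑ k, A k (T x) = x := by
      have := congrArg (fun f : H₂ →L[ℂ] H₂ => f x) hT1
      simpa [comp_apply, ContinuousLinearMap.sum_apply] using this
    have hQx : Q x = A k₀ (T x) := by
      conv_lhs => rw [← hx1]
      rw [map_sum, Finset.sum_eq_single k₀]
      · exact hQA0 (T x)
      · intro k _ hk; exact hQA k hk (T x)
      · intro h; exact absurd (Finset.mem_univ k₀) h
    have hsplit : (∑ k ∈ Finset.univ.erase k₀, A k (T x)) + A k₀ (T x) = x := by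
      rw [Finset.sum_erase_add Finset.univ _ (Finset.mem_univ k₀)]; exact hx1
    have hdiff : x - Q x = ∑ k ∈ Finset.univ.erase k₀, A k (T x) := by
      rw [hQx, sub_eq_iff_eq_add]
      exact hsplit.symm
    have hinner : ⟪x, x - Q x⟫_ℂ = 0 := by
      rw [hdiff, inner_sum]
      have : ∀ k ∈ Finset.univ.erase k₀, ⟪x, A k (T x)⟫_ℂ = ⟪adjoint (A k) x, T x⟫_ℂ := by
        intro k _
        rw [adjoint_inner_left]
      rw [Finset.sum_congr rfl this, ← sum_inner]
      have : ∑ k ∈ Finset.univ.erase k₀, adjoint (A k) x = 0 := by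
        have := hker
        simpa [ContinuousLinearMap.coe_sum', Finset.sum_apply] using this
      rw [this, inner_zero_left]
    have he : ∀ z, ⟪Q x, z⟫_ℂ = ⟪x, Q z⟫_ℂ := by
      intro z
      nth_rewrite 1 [← hQsa]
      exact adjoint_inner_left Q z x
    have hinner2 : ⟪Q x, x - Q x⟫_ℂ = 0 := by
      rw [he, map_sub, hQidem, sub_self, inner_zero_right]
    have : ⟪x - Q x, x - Q x⟫_ℂ = 0 := by
      rw [inner_sub_left, hinner, hinner2, sub_zero]
    have := inner_self_eq_zero.mp this
    exact (sub_eq_zero.mp this).symm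
  · intro x hx
    rw [hSB]
    have hA0 : adjoint (A k₀) x = 0 := by
      have h0 : ⟪adjoint (A k₀) x, adjoint (A k₀) x⟫_ℂ = 0 := by
        rw [adjoint_inner_left]
        have hmem : A k₀ (adjoint (A k₀) x) ∈
            LinearMap.ker ((∑ k ∈ Finset.univ.erase k₀, adjoint (A k) : H₂ →L[ℂ] H₁) : H₂ →ₗ[ℂ] H₁) :=
          hrange ⟨adjoint (A k₀) x, rfl⟩
        have := (Submodule.mem_orthogonal _ x).mp hx _ hmem
        rw [← inner_conj_symm, this, map_zero]
      exact inner_self_eq_zero.mp h0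
    have : Q x = adjoint (B k₀) (adjoint (A k₀) x) := by
      conv_lhs => rw [← hQsa]
      rw [hQ, adjoint_comp]
      simp [comp_apply]
    rw [this, hA0, map_zero]

theorem stmt8 {K : ℕ} (A : Fin K → (H₁ →L[ℂ] H₂)) (B : Fin K → (H₂ →L[ℂ] H₁))
    (T : H₂ →L[ℂ] H₁)
    (hclosed : ∀ k, IsClosed (LinearMap.range (A k : H₁ →ₗ[ℂ] H₂) : Set H₂))
    (horth1 : ∀ k k', k ≠ k' → LinearMap.range (A k : H₁ →ₗ[ℂ] H₂) ≤ LinearMap.ker (adjoint (A k') : H₂ →ₗ[ℂ] H₁))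
    (horth2 : ∀ k k', k ≠ k' → LinearMap.range (adjoint (A k) : H₂ →ₗ[ℂ] H₁) ≤ LinearMap.ker (A k' : H₁ →ₗ[ℂ] H₂))
    (hMP : ∀ k, IsMPInv (A k) (B k))
    (hT1 : (∑ k, A k) ∘L T = ContinuousLinearMap.id ℂ H₂)
    (hT2 : T ∘L (∑ k, A k) = ContinuousLinearMap.id ℂ H₁) :
    ∀ k₀ : Fin K,
      ((∀ x ∈ LinearMap.ker ((∑ k ∈ Finset.univ.erase k₀, adjoint (A k) : H₂ →L[ℂ] H₁) : H₂ →ₗ[ℂ] H₁),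
          ((∑ k, A k) ∘L B k₀) x = x) ∧
        (∀ x ∈ (LinearMap.ker ((∑ k ∈ Finset.univ.erase k₀, adjoint (A k) : H₂ →L[ℂ] H₁) : H₂ →ₗ[ℂ] H₁) : Submodule ℂ H₂)ᗮ,
          ((∑ k, A k) ∘L B k₀) x = 0)) ∧
      ((∀ x ∈ LinearMap.ker ((∑ k ∈ Finset.univ.erase k₀, A k : H₁ →L[ℂ] H₂) : H₁ →ₗ[ℂ] H₂),
          (B k₀ ∘L (∑ k, A k)) x = x) ∧
        (∀ x ∈ (LinearMap.ker ((∑ k ∈ Finset.univ.erase k₀, A k : H₁ →L[ℂ] H₂) : H₁ →ₗ[ℂ] H₂) : Submodule ℂ H₁)ᗮ,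
          (B k₀ ∘L (∑ k, A k)) x = 0)) := by
  intro k₀
  refine ⟨main_half A B T horth1 horth2 hMP hT1 k₀, ?_⟩
  -- dual system
  have horth1' : ∀ k k', k ≠ k' →
      LinearMap.range (adjoint (A k) : H₂ →ₗ[ℂ] H₁) ≤ LinearMap.ker (adjoint (adjoint (A k')) : H₁ →ₗ[ℂ] H₂) := by
    intro k k' h
    rw [adjoint_adjoint]
    exact horth2 k k' h
  have horth2' : ∀ k k', k ≠ k' →
      LinearMap.range (adjoint (adjoint (A k)) : H₁ →ₗ[ℂ] H₂) ≤ LinearMap.ker (adjoint (A k') : H₂ →ₗ[ℂ] H₁) := by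
    intro k k' h
    rw [adjoint_adjoint]
    exact horth1 k k' h
  have hMP' : ∀ k, IsMPInv (adjoint (A k)) (adjoint (B k)) := fun k =>
    isMPInv_adjoint (hMP k)
  have hadjsum : (∑ k, adjoint (A k)) = adjoint (∑ k, A k) := by
    exact (map_sum (ContinuousLinearMap.adjoint :
      (H₁ →L[ℂ] H₂) ≃ₗᵢ⋆[ℂ] (H₂ →L[ℂ] H₁)) A Finset.univ).symm
  have hadjsum' : ∀ (s : Finset (Fin K)), (∑ k ∈ s, adjoint (A k)) = adjoint (∑ k ∈ s, A k) := by
    intro s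
    exact (map_sum (ContinuousLinearMap.adjoint :
      (H₁ →L[ℂ] H₂) ≃ₗᵢ⋆[ℂ] (H₂ →L[ℂ] H₁)) A s).symm
  have hT1' : (∑ k, adjoint (A k)) ∘L adjoint T = ContinuousLinearMap.id ℂ H₁ := by
    rw [hadjsum, ← adjoint_comp]
    rw [hT2]
    exact adjoint_id
  have key := main_half (fun k => adjoint (A k)) (fun k => adjoint (B k)) (adjoint T)
    horth1' horth2' hMP' hT1' k₀
  -- identify the operator: B k₀ ∘L (∑ A k) = (∑ adjoint (A k)) ∘L adjoint (B k₀)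
  have hBA : ∀ k, k ≠ k₀ → B k₀ ∘L A k = 0 := by
    intro k hk
    have h0 : adjoint (A k) ∘L adjoint (B k₀) = 0 :=
      comp_MP_zero (hMP' k₀) (horth2' k₀ k (Ne.symm hk))
    have := congrArg adjoint h0
    rw [adjoint_comp, adjoint_adjoint, adjoint_adjoint, map_zero] at this
    exact this
  have hBS : B k₀ ∘L (∑ k, A k) = B k₀ ∘L A k₀ := by
    ext x
    simp only [comp_apply, ContinuousLinearMap.sum_apply, map_sum]
    rw [Finset.sum_eq_single k₀]
    · intro k _ hk
      have := congrArg (fun f : H₁ →L[ℂ] H₁ => f x) (hBA k hk)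
      simpa [comp_apply] using this
    · intro h; exact absurd (Finset.mem_univ k₀) h
  have hBSsa : adjoint (B k₀ ∘L (∑ k, A k)) = B k₀ ∘L (∑ k, A k) := by
    rw [hBS]
    exact (hMP k₀).2.2.2
  have hop : (∑ k, adjoint (A k)) ∘L adjoint (B k₀) = B k₀ ∘L (∑ k, A k) := by
    rw [hadjsum, ← adjoint_comp, hBSsa]
  -- rewrite kernels
  have hkers : (LinearMap.ker ((∑ k ∈ Finset.univ.erase k₀, adjoint (adjoint (A k)) : H₁ →L[ℂ] H₂) : H₁ →ₗ[ℂ] H₂)) =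
      (LinearMap.ker ((∑ k ∈ Finset.univ.erase k₀, A k : H₁ →L[ℂ] H₂) : H₁ →ₗ[ℂ] H₂)) := by
    simp [adjoint_adjoint]
  constructor
  · intro x hx
    have := key.1 x (by rw [hkers]; exact hx)
    rwa [hop] at this
  · intro x hx
    have := key.2 x (by rw [hkers]; exact hx)
    rwa [hop] at this
end
end

section
/- Let A_1, A_2, ... be bounded closed-range operators from H1 to H2 with R(A_k) ⊆ N(A_{k'}*) and R(A_k*) ⊆ N(A_{k'}) for all k ≠ k'. Suppose the series ∑_{k=1}^∞ A_k converges in operator norm. If N(∑_{k=1}^∞ A_k) = {0} and R(∑_{k=1}^∞ A_k) is closed, then there exists K_0 such that A_k = 0 for all k > K_0. -/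
noncomputable section
open ContinuousLinearMap
open scoped InnerProductSpace

variable {H₁ H₂ : Type*} [NormedAddCommGroup H₁] [InnerProductSpace ℂ H₁] [CompleteSpace H₁]
    [NormedAddCommGroup H₂] [InnerProductSpace ℂ H₂] [CompleteSpace H₂]

theorem stmt9 (A : ℕ → (H₁ →L[ℂ] H₂)) (S : H₁ →L[ℂ] H₂)
    (hclosed : ∀ k, IsClosed (LinearMap.range (A k : H₁ →ₗ[ℂ] H₂) : Set H₂))
    (horth1 : ∀ k k', k ≠ k' → LinearMap.range (A k : H₁ →ₗ[ℂ] H₂) ≤ LinearMap.ker (adjoint (A k') : H₂ →ₗ[ℂ] H₁))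
    (horth2 : ∀ k k', k ≠ k' → LinearMap.range (adjoint (A k) : H₂ →ₗ[ℂ] H₁) ≤ LinearMap.ker (A k' : H₁ →ₗ[ℂ] H₂))
    (hconv : Filter.Tendsto (fun N => ∑ k ∈ Finset.range N, A k) Filter.atTop (nhds S))
    (hker : LinearMap.ker (S : H₁ →ₗ[ℂ] H₂) = ⊥)
    (hrange : IsClosed (LinearMap.range (S : H₁ →ₗ[ℂ] H₂) : Set H₂)) :
    ∃ K₀ : ℕ, ∀ k > K₀, A k = 0 := by
  classical
  -- the range of S is a complete subspace
  haveI : CompleteSpace (LinearMap.range (S : H₁ →ₗ[ℂ] H₂)) := hrange.completeSpace_coe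
  -- corestriction of S to its range
  set T : H₁ →L[ℂ] LinearMap.range (S : H₁ →ₗ[ℂ] H₂) :=
    S.codRestrict (LinearMap.range (S : H₁ →ₗ[ℂ] H₂)) (fun x => LinearMap.mem_range_self _ x) with hT
  have hTker : LinearMap.ker (T : H₁ →ₗ[ℂ] LinearMap.range (S : H₁ →ₗ[ℂ] H₂)) = ⊥ := by
    rw [ContinuousLinearMap.ker_codRestrict]; exact hker
  have hTrange : LinearMap.range (T : H₁ →ₗ[ℂ] LinearMap.range (S : H₁ →ₗ[ℂ] H₂)) = ⊤ := by
    rw [LinearMap.range_eq_top]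
    rintro ⟨y, x, rfl⟩
    exact ⟨x, rfl⟩
  -- S is bounded below
  set e : H₁ ≃L[ℂ] LinearMap.range (S : H₁ →ₗ[ℂ] H₂) := ContinuousLinearEquiv.ofBijective T hTker hTrange
    with he
  set C : ℝ := ‖(e.symm : LinearMap.range (S : H₁ →ₗ[ℂ] H₂) →L[ℂ] H₁)‖ with hC
  have hCnn : 0 ≤ C := hC ▸ ContinuousLinearMap.opNorm_nonneg _
  have hbelow : ∀ x : H₁, ‖x‖ ≤ C * ‖S x‖ := by
    intro x
    have h1 : e.symm (e x) = x := e.symm_apply_apply x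
    have h2 : ‖e.symm (e x)‖ ≤ C * ‖e x‖ :=
      (e.symm : LinearMap.range (S : H₁ →ₗ[ℂ] H₂) →L[ℂ] H₁).le_opNorm (e x)
    have h3 : ‖(e x : H₂)‖ = ‖S x‖ := by
      have : ((e x : LinearMap.range (S : H₁ →ₗ[ℂ] H₂)) : H₂) = S x := rfl
      rw [this]
    rw [h1] at h2
    calc ‖x‖ ≤ C * ‖e x‖ := h2
      _ = C * ‖S x‖ := by rw [← h3]; rfl
  -- ‖A k‖ → 0
  have hA0 : Filter.Tendsto (fun k => ‖A k‖) Filter.atTop (nhds 0) := by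
    have h1 : Filter.Tendsto (fun N => ∑ k ∈ Finset.range (N + 1), A k)
        Filter.atTop (nhds S) := hconv.comp (Filter.tendsto_add_atTop_nat 1)
    have h2 : Filter.Tendsto
        (fun N => (∑ k ∈ Finset.range (N + 1), A k) - ∑ k ∈ Finset.range N, A k)
        Filter.atTop (nhds (S - S)) := h1.sub hconv
    rw [sub_self] at h2
    have h3 : (fun N => (∑ k ∈ Finset.range (N + 1), A k) - ∑ k ∈ Finset.range N, A k)
        = fun N => A N := by
      funext N; rw [Finset.sum_range_succ]; abel
    rw [h3] at h2
    simpa using h2.norm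
  -- pick K₀ with ‖A k‖ small for k > K₀
  have hsmall : ∀ᶠ k in Filter.atTop, ‖A k‖ < (C + 1)⁻¹ := by
    have hpos : (0 : ℝ) < (C + 1)⁻¹ := by positivity
    exact hA0.eventually (gt_mem_nhds hpos)
  obtain ⟨K₀, hK₀⟩ := Filter.eventually_atTop.mp hsmall
  refine ⟨K₀, fun k hk => ?_⟩
  by_contra hAk
  -- get a nonzero element of range (adjoint (A k))
  have hadj : adjoint (A k) ≠ 0 := by
    intro h
    apply hAk
    have := congrArg adjoint h
    rwa [adjoint_adjoint, map_zero] at this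
  obtain ⟨y, hy⟩ : ∃ y, adjoint (A k) y ≠ 0 := by
    by_contra h
    push_neg at h
    exact hadj (ContinuousLinearMap.ext fun y => by simpa using h y)
  set x : H₁ := adjoint (A k) y with hx
  -- S x = A k x
  have hSx : S x = A k x := by
    have hptw : Filter.Tendsto (fun N => (∑ j ∈ Finset.range N, A j) x)
        Filter.atTop (nhds (S x)) :=
      ((ContinuousLinearMap.apply ℂ H₂ x).continuous.tendsto S).comp hconv
    have heq : ∀ᶠ N in Filter.atTop, (∑ j ∈ Finset.range N, A j) x = A k x := by
      filter_upwards [Filter.eventually_ge_atTop (k + 1)] with N hN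
      rw [ContinuousLinearMap.sum_apply]
      refine Finset.sum_eq_single k (fun j _ hj => ?_) (fun h => absurd
        (Finset.mem_range.mpr (Nat.lt_of_lt_of_le (Nat.lt_succ_self k) hN)) h)
      exact horth2 k j (Ne.symm hj) (LinearMap.mem_range_self _ y)
    have : Filter.Tendsto (fun _ : ℕ => A k x) Filter.atTop (nhds (S x)) :=
      hptw.congr' heq
    exact tendsto_nhds_unique this tendsto_const_nhds
  -- contradiction
  have hxlb : ‖x‖ ≤ C * ‖A k x‖ := by rw [← hSx]; exact hbelow x
  have h1 : ‖A k x‖ ≤ ‖A k‖ * ‖x‖ := (A k).le_opNorm x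
  have hxpos : 0 < ‖x‖ := norm_pos_iff.mpr hy
  have hlt : ‖A k‖ < (C + 1)⁻¹ := hK₀ k (le_of_lt hk)
  have : ‖x‖ < ‖x‖ := by
    calc ‖x‖ ≤ C * ‖A k x‖ := hxlb
      _ ≤ C * (‖A k‖ * ‖x‖) := mul_le_mul_of_nonneg_left h1 hCnn
      _ ≤ (C + 1) * (‖A k‖ * ‖x‖) := by
          refine mul_le_mul_of_nonneg_right (by linarith) ?_
          exact mul_nonneg (ContinuousLinearMap.opNorm_nonneg _) (norm_nonneg _)
      _ < (C + 1) * ((C + 1)⁻¹ * ‖x‖) := by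
          have hC1 : (0 : ℝ) < C + 1 := by linarith
          apply mul_lt_mul_of_pos_left _ hC1
          exact mul_lt_mul_of_pos_right hlt hxpos
      _ = ‖x‖ := by field_simp
  exact lt_irrefl _ this
end
end

section
/- Let A be an m×n complex matrix of rank r, q = min(m,n), and r ≤ q' ≤ q. Let {f_1,...,f_{q'-r}} be an orthonormal subset of N(A), {g_1,...,g_{q'-r}} an orthonormal subset of N(A*), and d_1,...,d_{q'-r} nonzero scalars. Then A† = (A + ∑_{k=1}^{q'-r} d_k g_k f_k*)† − ∑_{k=1}^{q'-r} (1/d_k) f_k g_k*. -/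
noncomputable section
open Matrix

variable {a b c : ℕ}

lemma myMul_vecMulVec (A : Matrix (Fin a) (Fin b) ℂ) (u : Fin b → ℂ) (v : Fin c → ℂ) :
    A * vecMulVec u v = vecMulVec (A.mulVec u) v := by
  ext i j
  simp only [mul_apply, vecMulVec_apply, mulVec, dotProduct, Finset.sum_mul]
  exact Finset.sum_congr rfl fun k _ => by ring

lemma myVecMulVec_mul (A : Matrix (Fin b) (Fin c) ℂ) (u : Fin a → ℂ) (v : Fin b → ℂ) :
    vecMulVec u v * A = vecMulVec u (vecMul v A) := by
  ext i j
  simp only [mul_apply, vecMulVec_apply, vecMul, dotProduct, Finset.mul_sum]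
  exact Finset.sum_congr rfl fun k _ => by ring

lemma myVecMulVec_mul_vecMulVec (u : Fin a → ℂ) (v : Fin b → ℂ) (w : Fin b → ℂ) (z : Fin c → ℂ) :
    vecMulVec u v * vecMulVec w z = (v ⬝ᵥ w) • vecMulVec u z := by
  ext i j
  simp only [mul_apply, vecMulVec_apply, dotProduct, Matrix.smul_apply, smul_eq_mul, Finset.sum_mul]
  exact Finset.sum_congr rfl fun k _ => by ring

lemma myVecMulVec_zero_left (v : Fin c → ℂ) :
    vecMulVec (0 : Fin a → ℂ) v = 0 := by
  ext i j; simp [vecMulVec_apply]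

lemma myVecMulVec_zero_right (u : Fin a → ℂ) :
    vecMulVec u (0 : Fin c → ℂ) = 0 := by
  ext i j; simp [vecMulVec_apply]

lemma myVecMulVec_conjTranspose (u : Fin a → ℂ) (v : Fin c → ℂ) :
    (vecMulVec u v)ᴴ = vecMulVec (star v) (star u) := by
  ext i j; simp [vecMulVec_apply, conjTranspose_apply, mul_comm]

/-- `X` is the Moore–Penrose inverse of the complex matrix `A`. -/
def IsMP {m n : ℕ} (A : Matrix (Fin m) (Fin n) ℂ) (X : Matrix (Fin n) (Fin m) ℂ) : Prop :=
  A * X * A = A ∧ X * A * X = X ∧ (A * X)ᴴ = A * X ∧ (X * A)ᴴ = X * A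

lemma mp_unique_s10 {m n : ℕ} {A : Matrix (Fin m) (Fin n) ℂ} {X Y : Matrix (Fin n) (Fin m) ℂ}
    (hX : IsMP A X) (hY : IsMP A Y) : X = Y := by
  obtain ⟨hX1, hX2, hX3, hX4⟩ := hX
  obtain ⟨hY1, hY2, hY3, hY4⟩ := hY
  have hAX : A * X = A * Y := by
    calc A * X = (A * X)ᴴ := hX3.symm
    _ = ((A * Y * A) * X)ᴴ := by rw [hY1]
    _ = ((A * Y) * (A * X))ᴴ := by rw [Matrix.mul_assoc (A * Y) A X]
    _ = (A * X)ᴴ * (A * Y)ᴴ := conjTranspose_mul _ _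
    _ = (A * X) * (A * Y) := by rw [hX3, hY3]
    _ = (A * X * A) * Y := by rw [Matrix.mul_assoc (A * X) A Y]
    _ = A * Y := by rw [hX1]
  have hXA : X * A = Y * A := by
    calc X * A = (X * A)ᴴ := hX4.symm
    _ = ((X * A) * (Y * A))ᴴ := by
        rw [← Matrix.mul_assoc (X * A) Y A, Matrix.mul_assoc X A Y,
          Matrix.mul_assoc X (A * Y) A, hY1]
    _ = (Y * A)ᴴ * (X * A)ᴴ := conjTranspose_mul _ _
    _ = (Y * A) * (X * A) := by rw [hX4, hY4]
    _ = Y * (A * X * A) := by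
        rw [Matrix.mul_assoc Y A (X * A), ← Matrix.mul_assoc A X A]
    _ = Y * A := by rw [hX1]
  calc X = X * A * X := hX2.symm
  _ = Y * A * X := by rw [hXA]
  _ = Y * (A * X) := by rw [Matrix.mul_assoc]
  _ = Y * (A * Y) := by rw [hAX]
  _ = Y * A * Y := by rw [Matrix.mul_assoc]
  _ = Y := hY2

theorem stmt10 {m n r q' : ℕ} (A : Matrix (Fin m) (Fin n) ℂ)
    (hr : A.rank = r) (hrq : r ≤ q') (hq : q' ≤ min m n)
    (f : Fin (q' - r) → Fin n → ℂ) (g : Fin (q' - r) → Fin m → ℂ)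
    (hf : ∀ k l, star (f k) ⬝ᵥ f l = if k = l then 1 else 0)
    (hg : ∀ k l, star (g k) ⬝ᵥ g l = if k = l then 1 else 0)
    (hfN : ∀ k, A.mulVec (f k) = 0) (hgN : ∀ k, Aᴴ.mulVec (g k) = 0)
    (d : Fin (q' - r) → ℂ) (hd : ∀ k, d k ≠ 0)
    (X Y : Matrix (Fin n) (Fin m) ℂ)
    (hX : IsMP A X)
    (hY : IsMP (A + ∑ k, d k • vecMulVec (g k) (star (f k))) Y) :
    X = Y - ∑ k, (d k)⁻¹ • vecMulVec (f k) (star (g k)) := by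
  obtain ⟨hX1, hX2, hX3, hX4⟩ := hX
  set G : Matrix (Fin m) (Fin n) ℂ := ∑ k, d k • vecMulVec (g k) (star (f k)) with hG
  set S : Matrix (Fin n) (Fin m) ℂ := ∑ k, (d k)⁻¹ • vecMulVec (f k) (star (g k)) with hS
  have hgA : ∀ k, vecMul (star (g k)) A = 0 := by
    intro k
    have h := star_mulVec Aᴴ (g k)
    rw [conjTranspose_conjTranspose, hgN k] at h
    simpa using h.symm
  have hfAH : ∀ k, vecMul (star (f k)) Aᴴ = 0 := by
    intro k
    have h := star_mulVec A (f k)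
    rw [hfN k] at h
    simpa using h.symm
  have hXg : ∀ k, X.mulVec (g k) = 0 := by
    intro k
    have h1 : (A * X) *ᵥ g k = 0 := by
      rw [← hX3, conjTranspose_mul, ← mulVec_mulVec, hgN k, mulVec_zero]
    calc X *ᵥ g k = (X * (A * X)) *ᵥ g k := by rw [← Matrix.mul_assoc, hX2]
    _ = X *ᵥ ((A * X) *ᵥ g k) := by rw [mulVec_mulVec]
    _ = 0 := by rw [h1, mulVec_zero]
  have hfX : ∀ k, vecMul (star (f k)) X = 0 := by
    intro k
    have h1 : vecMul (star (f k)) (X * A) = 0 := by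
      rw [← hX4, conjTranspose_mul, ← vecMul_vecMul, hfAH k, zero_vecMul]
    calc star (f k) ᵥ* X = star (f k) ᵥ* (X * A * X) := by rw [hX2]
    _ = (star (f k) ᵥ* (X * A)) ᵥ* X := by rw [vecMul_vecMul]
    _ = 0 := by rw [h1, zero_vecMul]
  have hAS : A * S = 0 := by
    rw [hS, Matrix.mul_sum]
    apply Finset.sum_eq_zero; intro k _
    rw [Matrix.mul_smul, myMul_vecMulVec, hfN k, myVecMulVec_zero_left, smul_zero]
  have hSA : S * A = 0 := by
    rw [hS, Matrix.sum_mul]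
    apply Finset.sum_eq_zero; intro k _
    rw [Matrix.smul_mul, myVecMulVec_mul, hgA k, myVecMulVec_zero_right, smul_zero]
  have hGX : G * X = 0 := by
    rw [hG, Matrix.sum_mul]
    apply Finset.sum_eq_zero; intro k _
    rw [Matrix.smul_mul, myVecMulVec_mul, hfX k, myVecMulVec_zero_right, smul_zero]
  have hXG : X * G = 0 := by
    rw [hG, Matrix.mul_sum]
    apply Finset.sum_eq_zero; intro k _
    rw [Matrix.mul_smul, myMul_vecMulVec, hXg k, myVecMulVec_zero_left, smul_zero]
  set P : Matrix (Fin m) (Fin m) ℂ := ∑ k, vecMulVec (g k) (star (g k)) with hP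
  set Q : Matrix (Fin n) (Fin n) ℂ := ∑ k, vecMulVec (f k) (star (f k)) with hQ
  have hGS : G * S = P := by
    rw [hG, hS, hP, Matrix.sum_mul]
    refine Finset.sum_congr rfl fun k _ => ?_
    rw [Matrix.smul_mul, Matrix.mul_sum, Finset.sum_eq_single k]
    · rw [Matrix.mul_smul, myVecMulVec_mul_vecMulVec, hf k k, if_pos rfl, one_smul,
        smul_smul, mul_inv_cancel₀ (hd k), one_smul]
    · intro l _ hlk
      rw [Matrix.mul_smul, myVecMulVec_mul_vecMulVec, hf k l, if_neg (Ne.symm hlk)]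
      simp
    · intro h; exact absurd (Finset.mem_univ k) h
  have hSG : S * G = Q := by
    rw [hG, hS, hQ, Matrix.sum_mul]
    refine Finset.sum_congr rfl fun k _ => ?_
    rw [Matrix.smul_mul, Matrix.mul_sum, Finset.sum_eq_single k]
    · rw [Matrix.mul_smul, myVecMulVec_mul_vecMulVec, hg k k, if_pos rfl, one_smul,
        smul_smul, inv_mul_cancel₀ (hd k), one_smul]
    · intro l _ hlk
      rw [Matrix.mul_smul, myVecMulVec_mul_vecMulVec, hg k l, if_neg (Ne.symm hlk)]
      simp
    · intro h; exact absurd (Finset.mem_univ k) h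
  have hPA : P * A = 0 := by
    rw [hP, Matrix.sum_mul]
    apply Finset.sum_eq_zero; intro k _
    rw [myVecMulVec_mul, hgA k, myVecMulVec_zero_right]
  have hQX : Q * X = 0 := by
    rw [hQ, Matrix.sum_mul]
    apply Finset.sum_eq_zero; intro k _
    rw [myVecMulVec_mul, hfX k, myVecMulVec_zero_right]
  have hPG : P * G = G := by
    rw [hP, hG, Matrix.sum_mul]
    refine Finset.sum_congr rfl fun k _ => ?_
    rw [Matrix.mul_sum, Finset.sum_eq_single k]
    · rw [Matrix.mul_smul, myVecMulVec_mul_vecMulVec, hg k k, if_pos rfl, one_smul]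
    · intro l _ hlk
      rw [Matrix.mul_smul, myVecMulVec_mul_vecMulVec, hg k l, if_neg (Ne.symm hlk)]
      simp
    · intro h; exact absurd (Finset.mem_univ k) h
  have hQS : Q * S = S := by
    rw [hQ, hS, Matrix.sum_mul]
    refine Finset.sum_congr rfl fun k _ => ?_
    rw [Matrix.mul_sum, Finset.sum_eq_single k]
    · rw [Matrix.mul_smul, myVecMulVec_mul_vecMulVec, hf k k, if_pos rfl, one_smul]
    · intro l _ hlk
      rw [Matrix.mul_smul, myVecMulVec_mul_vecMulVec, hf k l, if_neg (Ne.symm hlk)]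
      simp
    · intro h; exact absurd (Finset.mem_univ k) h
  have hPH : Pᴴ = P := by
    rw [hP, conjTranspose_sum]
    refine Finset.sum_congr rfl fun k _ => ?_
    rw [myVecMulVec_conjTranspose, star_star]
  have hQH : Qᴴ = Q := by
    rw [hQ, conjTranspose_sum]
    refine Finset.sum_congr rfl fun k _ => ?_
    rw [myVecMulVec_conjTranspose, star_star]
  have hBXS1 : (A + G) * (X + S) = A * X + P := by
    rw [Matrix.add_mul, Matrix.mul_add, Matrix.mul_add, hAS, hGX, hGS, add_zero, zero_add]
  have hBXS2 : (X + S) * (A + G) = X * A + Q := by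
    rw [Matrix.add_mul, Matrix.mul_add, Matrix.mul_add, hSA, hXG, hSG, add_zero, zero_add]
  have hmp : IsMP (A + G) (X + S) := by
    refine ⟨?_, ?_, ?_, ?_⟩
    · rw [hBXS1, Matrix.add_mul, Matrix.mul_add, Matrix.mul_add, hX1,
        Matrix.mul_assoc A X G, hXG, Matrix.mul_zero, hPA, hPG, add_zero, zero_add]
    · rw [hBXS2, Matrix.add_mul, Matrix.mul_add, Matrix.mul_add, hX2,
        Matrix.mul_assoc X A S, hAS, Matrix.mul_zero, hQX, hQS, add_zero, zero_add]
    · rw [hBXS1, conjTranspose_add, hX3, hPH]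
    · rw [hBXS2, conjTranspose_add, hX4, hQH]
  have h := mp_unique_s10 hY hmp
  rw [h]
  abel
end
end

section
/- Let A and B be n×n complex matrices with R(B*) = N(A) and R(B) ⊆ N(A*). Then A + B is invertible and A† = (A + B)^{-1} − B†. -/
noncomputable section
open Matrix

private lemma mulVec_ext {n : ℕ} {M N : Matrix (Fin n) (Fin n) ℂ}
    (h : ∀ x, M.mulVec x = N.mulVec x) : M = N := by
  ext i j
  have := congr_fun (h (Pi.single j 1)) i
  simpa [Matrix.mulVec_single] using this

theorem stmt13 {n : ℕ} (A B : Matrix (Fin n) (Fin n) ℂ)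
    (hRB : LinearMap.range Bᴴ.mulVecLin = LinearMap.ker A.mulVecLin)
    (hRB2 : LinearMap.range B.mulVecLin ≤ LinearMap.ker Aᴴ.mulVecLin)
    (G H : Matrix (Fin n) (Fin n) ℂ) (hG : IsMP A G) (hH : IsMP B H) :
    IsUnit (A + B) ∧ G = (A + B)⁻¹ - H := by
  obtain ⟨hG1, hG2, hG3, hG4⟩ := hG
  obtain ⟨hH1, hH2, hH3, hH4⟩ := hH
  -- Aᴴ * B = 0
  have hAB : Aᴴ * B = 0 := by
    apply mulVec_ext
    intro x
    have : B.mulVecLin x ∈ LinearMap.ker Aᴴ.mulVecLin :=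
      hRB2 ⟨x, rfl⟩
    simpa [Matrix.mulVecLin_apply, Matrix.mulVec_mulVec] using this
  -- A * Bᴴ = 0
  have hABh : A * Bᴴ = 0 := by
    apply mulVec_ext
    intro x
    have : Bᴴ.mulVecLin x ∈ LinearMap.ker A.mulVecLin := by
      rw [← hRB]; exact ⟨x, rfl⟩
    simpa [Matrix.mulVecLin_apply, Matrix.mulVec_mulVec] using this
  have hBA : Bᴴ * A = 0 := by
    have := congrArg conjTranspose hAB
    simpa [Matrix.conjTranspose_mul] using this
  -- G * B = 0
  have hGB : G * B = 0 := by
    have hAG : A * G = Gᴴ * Aᴴ := by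
      conv_lhs => rw [← hG3]
      rw [Matrix.conjTranspose_mul]
    calc G * B = (G * A * G) * B := by rw [hG2]
      _ = G * (A * G) * B := by rw [Matrix.mul_assoc G A G]
      _ = G * (Gᴴ * Aᴴ) * B := by rw [hAG]
      _ = G * Gᴴ * (Aᴴ * B) := by noncomm_ring
      _ = 0 := by rw [hAB, Matrix.mul_zero]
  -- H * A = 0
  have hHA : H * A = 0 := by
    have hBH : B * H = Hᴴ * Bᴴ := by
      conv_lhs => rw [← hH3]
      rw [Matrix.conjTranspose_mul]
    calc H * A = (H * B * H) * A := by rw [hH2]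
      _ = H * (B * H) * A := by rw [Matrix.mul_assoc H B H]
      _ = H * (Hᴴ * Bᴴ) * A := by rw [hBH]
      _ = H * Hᴴ * (Bᴴ * A) := by noncomm_ring
      _ = 0 := by rw [hBA, Matrix.mul_zero]
  set P := G * A with hPdef
  set Q := H * B with hQdef
  have hPherm : Pᴴ = P := hG4
  have hQherm : Qᴴ = Q := hH4
  -- Q * Bᴴ = Bᴴ
  have hQBh : Q * Bᴴ = Bᴴ := by
    calc Q * Bᴴ = (H * B)ᴴ * Bᴴ := by rw [hQherm]
      _ = (B * (H * B))ᴴ := by rw [← Matrix.conjTranspose_mul]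
      _ = Bᴴ := by rw [← Matrix.mul_assoc, hH1]
  -- P * Q = 0
  have hPQ : P * Q = 0 := by
    calc P * Q = G * A * (H * B)ᴴ := by rw [hQherm]
      _ = G * A * (Bᴴ * Hᴴ) := by rw [Matrix.conjTranspose_mul]
      _ = G * (A * Bᴴ) * Hᴴ := by noncomm_ring
      _ = 0 := by rw [hABh, Matrix.mul_zero, Matrix.zero_mul]
  -- A * (1 - P) = 0
  have hA1P : A * (1 - P) = 0 := by
    rw [Matrix.mul_sub, Matrix.mul_one, hPdef, ← Matrix.mul_assoc, hG1, sub_self]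
  -- Q * (1 - P) = 1 - P
  have hQ1P : Q * (1 - P) = 1 - P := by
    apply mulVec_ext
    intro x
    have hz : A.mulVecLin ((1 - P).mulVec x) = 0 := by
      simp only [Matrix.mulVecLin_apply, Matrix.mulVec_mulVec, hA1P]
      simp
    have : (1 - P).mulVec x ∈ LinearMap.range Bᴴ.mulVecLin := by
      rw [hRB]; exact hz
    obtain ⟨y, hy⟩ := this
    simp only [Matrix.mulVecLin_apply] at hy
    rw [← Matrix.mulVec_mulVec, ← hy, Matrix.mulVec_mulVec, hQBh]
  -- take adjoints: (1 - P) * Q = 1 - P, but also (1-P)*Q = Q since P*Q = 0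
  have h1PQ : (1 - P) * Q = 1 - P := by
    have := congrArg conjTranspose hQ1P
    simpa [Matrix.conjTranspose_mul, hPherm, hQherm] using this
  have hQeq : Q = 1 - P := by
    rw [← h1PQ, Matrix.sub_mul, Matrix.one_mul, hPQ, sub_zero]
  have hPQ1 : P + Q = 1 := by rw [hQeq]; abel
  -- (G + H) * (A + B) = 1
  have hkey : (G + H) * (A + B) = 1 := by
    have : (G + H) * (A + B) = P + Q + (G * B + H * A) := by
      rw [hPdef, hQdef]; noncomm_ring
    rw [this, hGB, hHA, hPQ1]; simp
  refine ⟨(Matrix.isUnit_iff_isUnit_det _).mpr (Matrix.isUnit_det_of_left_inverse hkey), ?_⟩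
  have hinv : (A + B)⁻¹ = G + H := Matrix.inv_eq_left_inv hkey
  rw [hinv]; abel
end
end

section
/- Let n ≥ 2 be even and let C_{1,1} = circ(1,1,0,...,0) be the n×n circulant matrix with first row (1,1,0,...,0). Let v = (1,−1,1,−1,...,1,−1) ∈ ℝⁿ and let w ∈ ℝⁿ be defined by w(k) = (−1)^{k+1}(n² − (2k−1)n + 2) for k = 1,...,n. Then C_{1,1} + v vᵗ = circ(2,0,1,−1,...,1,−1) is invertible with inverse (1/(2n²)) circ(w). -/
noncomputable section
open Matrix

/-- The circulant matrix with first row `c`; each subsequent row is the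
cyclic right shift of the previous one. -/
def circ {n : ℕ} {α : Type*} (c : Fin n → α) : Matrix (Fin n) (Fin n) α :=
  Matrix.of fun i j => c (j - i)

lemma pow_val_add {n : ℕ} (heven : Even n) (a b : Fin n) :
    ((-1:ℝ))^(((a+b) : Fin n) : ℕ) = (-1)^(a:ℕ) * (-1)^(b:ℕ) := by
  rw [Fin.val_add, ← pow_add]
  conv_rhs => rw [← Nat.mod_add_div ((a:ℕ) + (b:ℕ)) n]
  rw [pow_add, pow_mul, heven.neg_one_pow, one_pow, mul_one]

lemma sq_pow_one {n : ℕ} (a : Fin n) : ((-1:ℝ))^(a:ℕ) * (-1)^(a:ℕ) = 1 := by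
  rw [← pow_add]; exact Even.neg_one_pow ⟨(a:ℕ), rfl⟩

lemma pow_val_sub {n : ℕ} [NeZero n] (heven : Even n) (a b : Fin n) :
    ((-1:ℝ))^(((b - a) : Fin n) : ℕ) = (-1)^(a:ℕ) * (-1)^(b:ℕ) := by
  have h := pow_val_add heven (b - a) a
  rw [sub_add_cancel] at h
  calc ((-1:ℝ))^(((b-a) : Fin n):ℕ)
      = (-1)^(((b-a):Fin n):ℕ) * ((-1)^(a:ℕ) * (-1)^(a:ℕ)) := by rw [sq_pow_one, mul_one]
    _ = (-1)^(a:ℕ) * (-1)^(b:ℕ) := by rw [← mul_assoc, ← h]; ring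

lemma circ_mul {n : ℕ} [NeZero n] (c d : Fin n → ℝ) :
    circ c * circ d = circ (fun m => ∑ k, c k * d (m - k)) := by
  ext i j
  show ∑ k, c (k - i) * d (j - k) = ∑ k, c k * d ((j - i) - k)
  rw [← Equiv.sum_comp (Equiv.addRight i) (fun k => c (k - i) * d (j - k))]
  refine Finset.sum_congr rfl fun l _ => ?_
  simp only [Equiv.coe_addRight, add_sub_cancel_right]
  rw [sub_sub, add_comm i l, ← sub_sub]

lemma circ_diag {n : ℕ} [NeZero n] (c : ℝ) :
    circ (fun m : Fin n => if m = 0 then c else 0) = c • (1 : Matrix (Fin n) (Fin n) ℝ) := by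
  ext i j
  simp only [circ, Matrix.of_apply, Matrix.smul_apply, Matrix.one_apply, smul_eq_mul]
  by_cases h : j = i
  · simp [h]
  · rw [if_neg (by rwa [sub_eq_zero]), if_neg (Ne.symm h), mul_zero]

theorem stmt14 {n : ℕ} (hn : 2 ≤ n) (heven : Even n)
    (v : Fin n → ℝ) (hv : ∀ j, v j = (-1 : ℝ)^(j : ℕ))
    (w : Fin n → ℝ)
    (hw : ∀ j, w j = (-1 : ℝ)^(j : ℕ) * ((n : ℝ)^2 - (2*((j : ℕ) : ℝ)+1)*(n : ℝ) + 2)) :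
    circ (fun j => if (j : ℕ) = 0 ∨ (j : ℕ) = 1 then (1 : ℝ) else 0) + vecMulVec v v =
      circ (fun j => if (j : ℕ) = 0 then (2 : ℝ) else if (j : ℕ) = 1 then 0
        else (-1 : ℝ)^(j : ℕ)) ∧
    IsUnit (circ (fun j => if (j : ℕ) = 0 ∨ (j : ℕ) = 1 then (1 : ℝ) else 0) + vecMulVec v v) ∧
    (circ (fun j => if (j : ℕ) = 0 ∨ (j : ℕ) = 1 then (1 : ℝ) else 0) + vecMulVec v v)⁻¹ =
      (1/(2*(n : ℝ)^2)) • circ w := by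
  haveI : NeZero n := ⟨by omega⟩
  set a : Fin n → ℝ := fun j => if (j : ℕ) = 0 then (2 : ℝ) else if (j : ℕ) = 1 then 0
      else (-1 : ℝ)^(j : ℕ) with ha_def
  set u : Fin n → ℝ := fun j => if (j : ℕ) = 0 ∨ (j : ℕ) = 1 then (1 : ℝ) else 0 with hu_def
  have h1val : ((1 : Fin n) : ℕ) = 1 := by
    rw [Fin.val_one']; exact Nat.mod_eq_of_lt (by omega)
  -- Part 1
  have hA : circ u + vecMulVec v v = circ a := by
    ext i j
    show u (j - i) + v i * v j = a (j - i)
    rw [hv, hv, ← pow_val_sub heven i j]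
    set k := j - i
    by_cases h0 : (k : ℕ) = 0
    · have hk : k = 0 := Fin.ext (by simpa using h0)
      simp [a, u, h0, hk]; norm_num
    · by_cases h1 : (k : ℕ) = 1
      · have hk : ¬ k = 0 := fun e => h0 (by simp [e])
        simp [a, u, h0, h1, hk]
      · have hk : ¬ k = 0 := fun e => h0 (by simp [e])
        simp [a, u, h0, h1, hk]
  -- the convolution
  have hn0 : (n : ℝ) ≠ 0 := Nat.cast_ne_zero.mpr (by omega)
  have hsum_lin : ∑ j : Fin n, ((j:ℕ):ℝ) = (n:ℝ)*((n:ℝ)-1)/2 := by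
    rw [Fin.sum_univ_eq_sum_range (fun i => ((i:ℕ):ℝ)), ← Nat.cast_sum]
    have h2 := congrArg (fun x : ℕ => (x:ℝ)) (Finset.sum_range_id_mul_two n)
    simp only [Nat.cast_mul, Nat.cast_ofNat] at h2
    rw [Nat.cast_sub (by omega : 1 ≤ n)] at h2
    push_cast at h2 ⊢
    linarith
  have hsum_p : ∑ j : Fin n, ((n:ℝ)^2 - (2*((j:ℕ):ℝ)+1)*(n:ℝ) + 2) = 2*(n:ℝ) := by
    have he : ∀ j : Fin n, (n:ℝ)^2 - (2*((j:ℕ):ℝ)+1)*(n:ℝ) + 2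
        = ((n:ℝ)^2 - (n:ℝ) + 2) - 2*(n:ℝ)*((j:ℕ):ℝ) := fun j => by ring
    simp_rw [he]
    rw [Finset.sum_sub_distrib, Finset.sum_const, ← Finset.mul_sum, hsum_lin,
      Finset.card_univ, Fintype.card_fin]
    field_simp
    ring
  have hconv : ∀ m : Fin n, (∑ k, a k * w (m - k)) = if m = 0 then 2*(n:ℝ)^2 else 0 := by
    intro m
    have hsplit : ∀ k : Fin n, a k = (-1:ℝ)^(k:ℕ)
        + ((if k = 0 then (1:ℝ) else 0) + (if k = 1 then (1:ℝ) else 0)) := by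
      intro k
      have hk0 : (k = 0) ↔ ((k:ℕ) = 0) := by rw [Fin.ext_iff]; simp
      have hk1 : (k = 1) ↔ ((k:ℕ) = 1) := by rw [Fin.ext_iff, h1val]
      by_cases h0 : (k:ℕ) = 0
      · simp [a, h0, hk0, hk1, h0.symm ▸ h0]
        norm_num [h0]
      · by_cases h1 : (k:ℕ) = 1
        · simp [a, h0, h1, hk0, hk1]
        · simp [a, h0, h1, hk0, hk1]
    simp_rw [hsplit, add_mul, ite_mul, one_mul, zero_mul, Finset.sum_add_distrib,
      Finset.sum_ite_eq' Finset.univ, Finset.mem_univ, if_true]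
    have halt : ∑ k : Fin n, (-1:ℝ)^(k:ℕ) * w (m - k) = (-1:ℝ)^(m:ℕ) * (2*(n:ℝ)) := by
      have hterm : ∀ k : Fin n, (-1:ℝ)^(k:ℕ) * w (m - k)
          = (-1:ℝ)^(m:ℕ) * ((n:ℝ)^2 - (2*((((m - k) : Fin n):ℕ):ℝ)+1)*(n:ℝ) + 2) := by
        intro k
        rw [hw, ← mul_assoc, pow_val_sub heven k m, ← mul_assoc, sq_pow_one, one_mul]
      simp_rw [hterm, ← Finset.mul_sum]
      rw [← Equiv.sum_comp (Equiv.subLeft m)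
        (fun j : Fin n => (n:ℝ)^2 - (2*((j:ℕ):ℝ)+1)*(n:ℝ) + 2)] at hsum_p
      simp only [Equiv.subLeft_apply] at hsum_p
      rw [hsum_p]
    rw [halt]
    by_cases hm : m = 0
    · subst hm
      have hneg1 : ((0 - 1 : Fin n) : ℕ) = n - 1 := by
        rw [Fin.sub_def]
        simp only [Fin.val_zero, h1val]
        show (n - 1 + 0) % n = n - 1
        rw [Nat.add_zero]
        exact Nat.mod_eq_of_lt (by omega)
      have h0v : ((0 : Fin n) : ℕ) = 0 := by
        simp [Fin.val_zero]
      have hodd : Odd (n - 1) := Nat.Even.sub_odd (by omega) heven odd_one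
      rw [hw, hw, hneg1, if_pos rfl]
      simp only [sub_zero, h0v, pow_zero, hodd.neg_one_pow]
      rw [Nat.cast_sub (by omega : 1 ≤ n), Nat.cast_zero]
      push_cast
      ring
    · rw [if_neg hm]
      have hmv : 1 ≤ (m : ℕ) := by
        rcases Nat.eq_zero_or_pos (m : ℕ) with h | h
        · exact absurd (Fin.ext (by simp [h])) hm
        · exact h
      have hm1 : ((m - 1 : Fin n) : ℕ) = (m : ℕ) - 1 := by
        have hlt := m.isLt
        rw [Fin.sub_def]
        simp only [h1val]
        show (n - 1 + (m:ℕ)) % n = (m:ℕ) - 1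
        rw [show n - 1 + (m:ℕ) = n + ((m:ℕ) - 1) from by omega, Nat.add_mod_left]
        exact Nat.mod_eq_of_lt (by omega)
      obtain ⟨t, ht⟩ : ∃ t, (m : ℕ) = t + 1 := ⟨(m:ℕ) - 1, by omega⟩
      rw [hw, hw, hm1]
      simp only [sub_zero, ht, Nat.add_sub_cancel]
      push_cast
      simp only [pow_succ]
      ring
  -- right inverse
  have hmul : (circ u + vecMulVec v v) * ((1/(2*(n : ℝ)^2)) • circ w) = 1 := by
    rw [hA, mul_smul_comm, circ_mul]
    have : (fun m : Fin n => ∑ k, a k * w (m - k))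
        = fun m : Fin n => if m = 0 then 2*(n:ℝ)^2 else 0 := funext hconv
    rw [this, circ_diag, smul_smul]
    rw [one_div_mul_cancel (by positivity), one_smul]
  exact ⟨hA, (Matrix.isUnit_iff_isUnit_det _).mpr (Matrix.isUnit_det_of_right_inverse hmul), Matrix.inv_eq_right_inv hmul⟩
end
end

section
/- Let n ≥ 2 and let C_{1,−1} = circ(1,−1,0,...,0) be the n×n circulant matrix with first row (1,−1,0,...,0), and let e be the all-ones vector. Then C_{1,−1} + e eᵗ = circ(2,0,1,...,1) is invertible with inverse −(1/(2n)) circ(1,3,5,...,2n−1) + ((n²+2)/(2n²)) e eᵗ. -/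
noncomputable section
open Matrix

private lemma sum_odd (n : ℕ) : ∑ i ∈ Finset.range n, (2*(i:ℝ)+1) = (n:ℝ)^2 := by
  induction n with
  | zero => simp
  | succ k ih => rw [Finset.sum_range_succ, ih]; push_cast; ring

theorem stmt15 {n : ℕ} (hn : 2 ≤ n)
    (C : Matrix (Fin n) (Fin n) ℝ)
    (hC : C = circ (fun j => if (j : ℕ) = 0 then (1 : ℝ) else if (j : ℕ) = 1 then -1 else 0)) :
    C + vecMulVec (fun _ => (1 : ℝ)) (fun _ => 1) =
      circ (fun j => if (j : ℕ) = 0 then (2 : ℝ) else if (j : ℕ) = 1 then 0 else 1) ∧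
    IsUnit (C + vecMulVec (fun _ => (1 : ℝ)) (fun _ => 1)) ∧
    (C + vecMulVec (fun _ => (1 : ℝ)) (fun _ => 1))⁻¹ =
      -(1/(2*(n : ℝ))) • circ (fun j => 2*((j : ℕ) : ℝ)+1) +
        (((n : ℝ)^2+2)/(2*(n : ℝ)^2)) • vecMulVec (fun _ => (1 : ℝ)) (fun _ => 1) := by
  haveI : NeZero n := ⟨by omega⟩
  have hnR : (n:ℝ) ≠ 0 := Nat.cast_ne_zero.mpr (by omega)
  have hv1 : ((1 : Fin n) : ℕ) = 1 := by
    simp [Fin.val_one', Nat.mod_eq_of_lt (by omega : 1 < n)]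
  -- value of a - 1
  have hsub1 : ∀ a : Fin n, ((a - 1 : Fin n) : ℕ) = if (a:ℕ) = 0 then n - 1 else (a:ℕ) - 1 := by
    intro a
    rw [Fin.sub_def, hv1]
    rcases Nat.eq_zero_or_pos (a:ℕ) with h | h
    · simp [h, Nat.mod_eq_of_lt (by omega : n - 1 < n)]
    · have ha : (a:ℕ) < n := a.isLt
      rw [if_neg (by omega)]
      show (n - 1 + (a:ℕ)) % n = (a:ℕ) - 1
      have h2 : n - 1 + (a:ℕ) = ((a:ℕ) - 1) + n := by omega
      rw [h2, Nat.add_mod_right, Nat.mod_eq_of_lt (by omega)]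
  set B : Matrix (Fin n) (Fin n) ℝ :=
    -(1/(2*(n : ℝ))) • circ (fun j => 2*((j : ℕ) : ℝ)+1) +
      (((n : ℝ)^2+2)/(2*(n : ℝ)^2)) • vecMulVec (fun _ => (1 : ℝ)) (fun _ => 1) with hB
  have hBapp : ∀ i j : Fin n, B i j
      = -(1/(2*(n:ℝ))) * (2*(((j - i : Fin n):ℕ):ℝ)+1) + ((n:ℝ)^2+2)/(2*(n:ℝ)^2) := by
    intro i j
    simp [hB, circ, vecMulVec_apply, Matrix.add_apply, Matrix.smul_apply]
  have hAapp : ∀ i j : Fin n, ((C + vecMulVec (fun _ => (1:ℝ)) (fun _ => (1:ℝ)) : Matrix (Fin n) (Fin n) ℝ)) i j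
      = (if ((j - i : Fin n):ℕ) = 0 then (1:ℝ) else if ((j - i : Fin n):ℕ) = 1 then -1 else 0) + 1 := by
    intro i j
    simp [hC, circ, vecMulVec_apply, Matrix.add_apply]
  -- sum of columns of B
  have hsumB : ∀ j : Fin n, ∑ k, B k j = 1/(n:ℝ) := by
    intro j
    have e1 : ∑ k : Fin n, B k j
        = ∑ m : Fin n, (-(1/(2*(n:ℝ))) * (2*((m:ℕ):ℝ)+1) + ((n:ℝ)^2+2)/(2*(n:ℝ)^2)) := by
      refine Fintype.sum_equiv (Equiv.subLeft j) _ _ ?_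
      intro k
      rw [hBapp]
      simp [Equiv.subLeft_apply]
    rw [e1, Finset.sum_add_distrib, ← Finset.mul_sum, Finset.sum_const]
    have : ∑ m : Fin n, (2*((m:ℕ):ℝ)+1) = (n:ℝ)^2 := by
      rw [Fin.sum_univ_eq_sum_range (fun i => (2*(i:ℝ)+1))]
      exact sum_odd n
    rw [this]
    simp only [Finset.card_univ, Fintype.card_fin, nsmul_eq_mul]
    field_simp
    ring
  -- the key: A * B = 1
  have hmul : ((C + vecMulVec (fun _ => (1:ℝ)) (fun _ => (1:ℝ)) : Matrix (Fin n) (Fin n) ℝ)) * B = 1 := by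
    ext i j
    rw [Matrix.mul_apply]
    have hrow : ∀ k : Fin n, ((C + vecMulVec (fun _ => (1:ℝ)) (fun _ => (1:ℝ)) : Matrix (Fin n) (Fin n) ℝ)) i k * B k j
        = B k j + ((if k = i then B i j else 0) + (if k = i + 1 then -B (i+1) j else 0)) := by
      intro k
      rw [hAapp]
      rcases eq_or_ne k i with rfl | hki
      · have h0 : ((k - k : Fin n):ℕ) = 0 := by simp
        have hne : k ≠ k + 1 := by
          intro h
          have h2 := congrArg Fin.val (left_eq_add.mp h)
          rw [hv1, Fin.val_zero] at h2
          exact one_ne_zero h2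
        rw [if_pos h0, if_pos rfl, if_neg hne]
        ring
      · rcases eq_or_ne k (i + 1) with rfl | hki1
        · have h1 : ((i + 1 - i : Fin n):ℕ) = 1 := by
            rw [add_sub_cancel_left]; exact hv1
          rw [if_neg (show ¬((i + 1 - i : Fin n):ℕ) = 0 by rw [h1]; exact one_ne_zero),
            if_pos h1, if_neg hki, if_pos rfl]
          ring
        · have h0 : ((k - i : Fin n):ℕ) ≠ 0 := by
            intro h
            exact hki (sub_eq_zero.mp (Fin.ext (by rw [h, Fin.val_zero])))
          have h1 : ((k - i : Fin n):ℕ) ≠ 1 := by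
            intro h
            apply hki1
            have h2 : (k - i : Fin n) = 1 := Fin.ext (by rw [h, hv1])
            rw [← h2]; abel
          rw [if_neg h0, if_neg h1, if_neg hki, if_neg hki1]
          ring
    rw [Finset.sum_congr rfl (fun k _ => hrow k), Finset.sum_add_distrib,
      Finset.sum_add_distrib, hsumB, Finset.sum_ite_eq' Finset.univ i,
      Finset.sum_ite_eq' Finset.univ (i+1)]
    simp only [Finset.mem_univ, if_true]
    rw [hBapp, hBapp]
    have hji1 : (j - (i + 1) : Fin n) = (j - i) - 1 := by abel
    rw [hji1, hsub1 (j - i)]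
    rcases eq_or_ne i j with rfl | hij
    · have h0 : ((i - i : Fin n):ℕ) = 0 := by simp
      rw [h0, if_pos rfl, Matrix.one_apply_eq]
      have : ((n:ℕ) - 1 : ℕ) = ((n:ℝ) - 1 : ℝ) := by push_cast [Nat.cast_sub (by omega : 1 ≤ n)]; ring
      rw [this]
      field_simp
      ring
    · have h0 : ((j - i : Fin n):ℕ) ≠ 0 := by
        intro h
        exact hij (sub_eq_zero.mp (Fin.ext (by rw [h, Fin.val_zero]))).symm
      rw [if_neg h0, Matrix.one_apply_ne hij]
      have hpos : 1 ≤ ((j - i : Fin n):ℕ) := by omega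
      have : (((j - i : Fin n):ℕ) - 1 : ℕ) = ((((j - i : Fin n):ℕ):ℝ) - 1 : ℝ) := by
        push_cast [Nat.cast_sub hpos]; ring
      rw [this]
      field_simp
      ring
  refine ⟨?_, (Matrix.isUnit_iff_isUnit_det _).mpr (Matrix.isUnit_det_of_right_inverse hmul), Matrix.inv_eq_right_inv hmul⟩
  ext i j
  rw [hAapp]
  simp only [circ, Matrix.of_apply]
  split_ifs <;> norm_num
end
end

section
/- Let n ≥ 2, α ∈ ℂ \ {0}, and C = α(I − Π) where Π is the n×n cyclic shift circulant matrix circ(0,1,0,...,0). Then N(C) = span{(1,1,...,1)} and C† = (1/(2nα)) circ(n−1, n−3, n−5, ..., 2−n, 1−n). -/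
noncomputable section
open Matrix

theorem stmt16 {n : ℕ} (hn : 2 ≤ n) (α : ℂ) (hα : α ≠ 0)
    (C : Matrix (Fin n) (Fin n) ℂ)
    (hC : C = α • ((1 : Matrix (Fin n) (Fin n) ℂ) -
      circ (fun j => if (j : ℕ) = 1 then (1 : ℂ) else 0))) :
    LinearMap.ker C.mulVecLin = Submodule.span ℂ {fun _ => (1 : ℂ)} ∧
    IsMP C ((1/(2*(n : ℂ)*α)) • circ (fun j => (n : ℂ) - 1 - 2*((j : ℕ) : ℂ))) := by
  obtain ⟨m, rfl⟩ : ∃ m, n = m + 2 := ⟨n - 2, by omega⟩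
  have hN0 : ((m + 2 : ℕ) : ℂ) ≠ 0 := Nat.cast_ne_zero.2 (by omega)
  set β : ℂ := 1/(2*((m + 2 : ℕ) : ℂ)*α) with hβ
  set c : Fin (m+2) → ℂ := fun j => ((m + 2 : ℕ) : ℂ) - 1 - 2*((j : ℕ) : ℂ) with hc
  set X : Matrix (Fin (m+2)) (Fin (m+2)) ℂ := β • circ c with hX
  set J : Matrix (Fin (m+2)) (Fin (m+2)) ℂ := Matrix.of fun _ _ => (1 : ℂ) with hJ
  set P : Matrix (Fin (m+2)) (Fin (m+2)) ℂ := 1 - (((m + 2 : ℕ) : ℂ))⁻¹ • J with hP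
  -- entry description of C
  have h4 : ∀ i j : Fin (m+2), (((j - i : Fin (m+2)) : ℕ) = 1) ↔ j = i + 1 := by
    intro i j
    constructor
    · intro h
      have h2 : j - i = 1 := Fin.ext (by rw [h, Fin.val_one])
      exact (sub_eq_iff_eq_add.1 h2).trans (add_comm 1 i)
    · intro h
      subst h
      rw [add_sub_cancel_left, Fin.val_one]
  have hne1 : ∀ i : Fin (m+2), ¬ i = i + 1 := fun i hh => one_ne_zero (left_eq_add.mp hh)
  have hne2 : ∀ k : Fin (m+2), ¬ k = k - 1 := fun k hh => one_ne_zero (sub_eq_self.mp hh.symm)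
  have hCe : ∀ i j : Fin (m+2), C i j =
      (if i = j then α else 0) - (if j = i + 1 then α else 0) := by
    intro i j
    rw [hC]
    simp only [Matrix.smul_apply, Matrix.sub_apply, one_apply, circ, of_apply, smul_eq_mul]
    rw [if_congr (h4 i j) rfl rfl]
    by_cases h : i = j
    · subst h; simp [hne1 i]
    · by_cases h' : j = i + 1 <;> simp [h, h']
  -- generic products with C
  have hmulL : ∀ (M : Matrix (Fin (m+2)) (Fin (m+2)) ℂ) (i k : Fin (m+2)),
      (C * M) i k = α * (M i k - M (i + 1) k) := by
    intro M i k
    rw [mul_apply]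
    calc ∑ j, C i j * M j k
        = ∑ j, ((if i = j then α * M j k else 0) - (if j = i + 1 then α * M j k else 0)) := by
          refine Finset.sum_congr rfl fun j _ => ?_
          rw [hCe]
          by_cases h : i = j
          · subst h; simp [hne1 i]
          · by_cases h' : j = i + 1 <;> simp [h, h', mul_comm]
      _ = α * M i k - α * M (i + 1) k := by
          rw [Finset.sum_sub_distrib]
          simp
      _ = α * (M i k - M (i + 1) k) := by ring
  have hmulR : ∀ (M : Matrix (Fin (m+2)) (Fin (m+2)) ℂ) (i k : Fin (m+2)),
      (M * C) i k = α * (M i k - M i (k - 1)) := by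
    intro M i k
    rw [mul_apply]
    calc ∑ j, M i j * C j k
        = ∑ j, ((if j = k then α * M i j else 0) - (if j = k - 1 then α * M i j else 0)) := by
          refine Finset.sum_congr rfl fun j _ => ?_
          rw [hCe]
          have hiff : (k = j + 1) ↔ (j = k - 1) :=
            ⟨fun h => (sub_eq_iff_eq_add.2 h).symm, fun h => sub_eq_iff_eq_add.1 h.symm⟩
          rw [if_congr hiff rfl rfl]
          by_cases h : j = k
          · subst h; simp [hne2 j, mul_comm]
          · by_cases h' : j = k - 1 <;> simp [h, h', mul_comm]
      _ = α * M i k - α * M i (k - 1) := by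
          rw [Finset.sum_sub_distrib]
          simp
      _ = α * (M i k - M i (k - 1)) := by ring
  have hmv : ∀ (v : Fin (m+2) → ℂ) (i : Fin (m+2)), C.mulVec v i = α * (v i - v (i + 1)) := by
    intro v i
    rw [mulVec, dotProduct]
    calc ∑ j, C i j * v j
        = ∑ j, ((if i = j then α * v j else 0) - (if j = i + 1 then α * v j else 0)) := by
          refine Finset.sum_congr rfl fun j _ => ?_
          rw [hCe]
          by_cases h : i = j
          · subst h; simp [hne1 i]
          · by_cases h' : j = i + 1 <;> simp [h, h']
      _ = α * v i - α * v (i + 1) := by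
          rw [Finset.sum_sub_distrib]
          simp
      _ = α * (v i - v (i + 1)) := by ring
  -- the key difference formula
  have key : ∀ d : Fin (m+2), c d - c (d - 1) =
      (if d = 0 then 2*((m + 2 : ℕ) : ℂ) else 0) - 2 := by
    intro d
    by_cases hd : d = 0
    · subst hd
      have hv : (((0 : Fin (m+2)) - 1 : Fin (m+2)) : ℕ) = m + 1 := by
        rw [Fin.coe_sub_one]; simp
      simp only [hc, hv, if_pos rfl, Fin.val_zero]
      push_cast
      ring
    · have hdv : 1 ≤ (d : ℕ) := Nat.one_le_iff_ne_zero.2 fun h => hd (Fin.ext (by simp [h]))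
      have hv : ((d - 1 : Fin (m+2)) : ℕ) = (d : ℕ) - 1 := by rw [Fin.coe_sub_one, if_neg hd]
      simp only [hc, hv, if_neg hd]
      rw [Nat.cast_sub hdv]
      push_cast
      ring
  have hB : ((2:ℂ) + (m:ℂ)) ≠ 0 := fun h => hN0 (by push_cast; linear_combination h)
  have hA : ((4:ℂ) + (m:ℂ)*2) ≠ 0 := fun h => hN0 (by push_cast; linear_combination h/2)
  have hB' : ((m:ℂ) + 2) ≠ 0 := fun h => hB (by linear_combination h)
  have hid1 : 1 / (2 * ((m+2:ℕ):ℂ)) * (2 * ((m+2:ℕ):ℂ) - 2) = 1 - (((m+2:ℕ):ℂ))⁻¹ := by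
    field_simp
  have hid2 : 1 / (2 * ((m+2:ℕ):ℂ)) * (0 - 2) = 0 - (((m+2:ℕ):ℂ))⁻¹ := by
    field_simp
    ring
  have hαβ : α * β = 1 / (2 * ((m + 2 : ℕ) : ℂ)) := by
    have h2N : (2*((m + 2 : ℕ) : ℂ)) ≠ 0 := mul_ne_zero two_ne_zero hN0
    rw [hβ, mul_one_div, div_eq_div_iff (mul_ne_zero h2N hα) h2N]; ring
  -- C * X = P and X * C = P
  have hXe : ∀ i k : Fin (m+2), X i k = β * c (k - i) := fun i k => rfl
  have hCX : C * X = P := by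
    ext i k
    rw [hmulL, hXe, hXe]
    have h5 : k - (i + 1) = (k - i) - 1 := sub_add_eq_sub_sub k i 1
    rw [h5]
    have hr : α * (β * c (k - i) - β * c (k - i - 1)) = (α * β) * (c (k - i) - c (k - i - 1)) := by
      ring
    rw [hr, key, hαβ]
    have hz : (k - i = 0) ↔ (i = k) := by rw [sub_eq_zero, eq_comm]
    rw [if_congr hz rfl rfl]
    simp only [hP, Matrix.sub_apply, one_apply, Matrix.smul_apply, hJ, of_apply, smul_eq_mul, mul_one]
    by_cases h : i = k
    · rw [if_pos h, if_pos h]; exact hid1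
    · rw [if_neg h, if_neg h]; exact hid2
  have hXC : X * C = P := by
    ext i k
    rw [hmulR, hXe, hXe]
    have h5 : k - 1 - i = (k - i) - 1 := sub_right_comm k 1 i
    rw [h5]
    have hr : α * (β * c (k - i) - β * c (k - i - 1)) = (α * β) * (c (k - i) - c (k - i - 1)) := by
      ring
    rw [hr, key, hαβ]
    have hz : (k - i = 0) ↔ (i = k) := by rw [sub_eq_zero, eq_comm]
    rw [if_congr hz rfl rfl]
    simp only [hP, Matrix.sub_apply, one_apply, Matrix.smul_apply, hJ, of_apply, smul_eq_mul, mul_one]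
    by_cases h : i = k
    · rw [if_pos h, if_pos h]; exact hid1
    · rw [if_neg h, if_neg h]; exact hid2
  -- row/column sums vanish
  have hsum : ∑ d : Fin (m+2), c d = 0 := by
    have g0 := Finset.sum_range_id_mul_two (m+2)
    have g : ((∑ i ∈ Finset.range (m+2), i : ℕ) : ℂ) * 2 =
        ((m+2 : ℕ) : ℂ) * ((m+1 : ℕ) : ℂ) := by
      have h1 : m + 2 - 1 = m + 1 := by omega
      rw [h1] at g0
      exact_mod_cast congrArg (Nat.cast (R := ℂ)) g0
    rw [show (∑ d : Fin (m+2), c d) =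
        ∑ i ∈ Finset.range (m+2), (((m + 2 : ℕ) : ℂ) - 1 - 2 * (i : ℂ)) from
      Fin.sum_univ_eq_sum_range (fun i : ℕ => ((m + 2 : ℕ) : ℂ) - 1 - 2 * (i : ℂ)) (m+2)]
    simp only [Finset.sum_sub_distrib, Finset.sum_const, Finset.card_range, nsmul_eq_mul]
    rw [← Finset.mul_sum]
    push_cast at g ⊢
    linear_combination -g
  have hXJ : X * J = 0 := by
    ext i k
    rw [mul_apply]
    have hterm : ∀ j : Fin (m+2), X i j * J j k = β * c (j - i) := by
      intro j; rw [hXe]; simp [hJ]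
    rw [Finset.sum_congr rfl fun j _ => hterm j, ← Finset.mul_sum]
    have hre : (∑ j : Fin (m+2), c (j - i)) = ∑ d : Fin (m+2), c d :=
      Fintype.sum_equiv (Equiv.subRight i) _ _ (fun j => rfl)
    rw [hre, hsum]
    simp
  have hJC : J * C = 0 := by
    ext i k
    rw [hmulR]
    simp [hJ]
  -- conclude
  constructor
  · -- kernel
    apply le_antisymm
    · intro v hv
      have hv' : C.mulVec v = 0 := by
        rw [← mulVecLin_apply]; exact LinearMap.mem_ker.1 hv
      have hrel : ∀ i : Fin (m+2), v (i + 1) = v i := by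
        intro i
        have h0 := congrFun hv' i
        rw [hmv] at h0
        rcases mul_eq_zero.1 h0 with h | h
        · exact absurd h hα
        · exact (sub_eq_zero.1 h).symm
      have hconst : ∀ k (hk : k < m + 2), v ⟨k, hk⟩ = v ⟨0, by omega⟩ := by
        intro k
        induction k with
        | zero => intro hk; rfl
        | succ k ih =>
          intro hk
          have hk' : k < m + 2 := by omega
          have he : (⟨k+1, hk⟩ : Fin (m+2)) = (⟨k, hk'⟩ : Fin (m+2)) + 1 := by
            apply Fin.ext
            simp [Fin.add_def, Fin.val_one, Nat.mod_eq_of_lt hk]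
          rw [he, hrel, ih]
      rw [Submodule.mem_span_singleton]
      refine ⟨v 0, ?_⟩
      funext i
      have : v i = v 0 := hconst i.1 i.2
      simp [this]
    · rw [Submodule.span_le, Set.singleton_subset_iff]
      simp only [SetLike.mem_coe, LinearMap.mem_ker, mulVecLin_apply]
      funext i
      rw [hmv]
      simp
  · refine ⟨?_, ?_, ?_, ?_⟩
    · rw [hCX, hP, sub_mul, one_mul, smul_mul_assoc, hJC, smul_zero, sub_zero]
    · rw [mul_assoc, hCX, hP, mul_sub, mul_one, mul_smul_comm, hXJ, smul_zero, sub_zero]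
    · have hPh : Pᴴ = P := by
        ext i j
        simp only [hP, conjTranspose_apply, Matrix.sub_apply, one_apply, Matrix.smul_apply, hJ, of_apply,
          smul_eq_mul, mul_one]
        by_cases h : i = j <;> simp [h, eq_comm, star_sub, map_inv₀]
      rw [hCX]; exact hPh
    · rw [hXC]
      have hPh : Pᴴ = P := by
        ext i j
        simp only [hP, conjTranspose_apply, Matrix.sub_apply, one_apply, Matrix.smul_apply, hJ, of_apply,
          smul_eq_mul, mul_one]
        by_cases h : i = j <;> simp [h, eq_comm, star_sub, map_inv₀]
      exact hPh
end
end

section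
/- Let k, q be positive integers, n = q(k+1), and let C be the n×n circulant matrix circ(k,−1,...,−1, k,−1,...,−1, ..., k,−1,...,−1) whose first row has entry k in positions 1, k+2, 2k+3, ..., n−k and entry −1 elsewhere. Then C² = nC and C† = (1/n²) C. -/
noncomputable section
open Matrix

private lemma psi_sub {k q : ℕ} (a b : Fin (q*(k+1))) :
    (((a - b : Fin (q*(k+1))) : ℕ) : ZMod (k+1))
      = ((a:ℕ) : ZMod (k+1)) - ((b:ℕ) : ZMod (k+1)) := by
  rcases Nat.eq_zero_or_pos q with hq | hq
  · subst hq; exact absurd a.isLt (by simp)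
  have hn : (((q*(k+1) : ℕ)) : ZMod (k+1)) = 0 :=
    (ZMod.natCast_eq_zero_iff _ _).2 (dvd_mul_left _ _)
  rw [Fin.sub_def]
  show (((q*(k+1) - (b:ℕ) + (a:ℕ)) % (q*(k+1)) : ℕ) : ZMod (k+1)) = _
  have hmod : ∀ x : ℕ, ((x % (q*(k+1)) : ℕ) : ZMod (k+1)) = (x : ZMod (k+1)) := by
    intro x
    conv_rhs => rw [← Nat.mod_add_div x (q*(k+1))]
    push_cast [hn]
    ring
  rw [hmod, Nat.cast_add, Nat.cast_sub (le_of_lt b.isLt), hn]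
  ring

private lemma sum_fiber {k q : ℕ} (g : ZMod (k+1) → ℂ) :
    ∑ s : Fin (q*(k+1)), g (((s:ℕ) : ZMod (k+1))) = (q : ℂ) * ∑ x : ZMod (k+1), g x := by
  rw [← Equiv.sum_comp (finProdFinEquiv : Fin q × Fin (k+1) ≃ Fin (q*(k+1)))
      (fun s => g (((s:ℕ) : ZMod (k+1)))), Fintype.sum_prod_type]
  have h1 : ∀ (a : Fin q) (b : Fin (k+1)),
      g ((((finProdFinEquiv (a, b) : Fin (q*(k+1))):ℕ)) : ZMod (k+1))
        = g ((b:ℕ) : ZMod (k+1)) := by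
    intro a b
    congr 1
    rw [finProdFinEquiv_apply_val]
    push_cast
    simp
  simp_rw [h1]
  rw [Finset.sum_const, Finset.card_univ, Fintype.card_fin, nsmul_eq_mul]
  congr 1
  apply Fintype.sum_bijective (fun b : Fin (k+1) => ((b:ℕ) : ZMod (k+1)))
  · rw [Fintype.bijective_iff_injective_and_card]
    refine ⟨fun b₁ b₂ h => ?_, by simp [ZMod.card]⟩
    have h2 := congrArg ZMod.val h
    rw [ZMod.val_natCast_of_lt b₁.isLt, ZMod.val_natCast_of_lt b₂.isLt] at h2
    exact Fin.ext h2
  · intro b; rfl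

private lemma conv_sum {k : ℕ} (d : ZMod (k+1)) :
    ∑ x : ZMod (k+1), (if x = 0 then (k:ℂ) else -1) * (if d - x = 0 then (k:ℂ) else -1)
      = ((k:ℂ)+1) * (if d = 0 then (k:ℂ) else -1) := by
  have expand : ∀ x : ZMod (k+1),
      (if x = 0 then (k:ℂ) else -1) * (if d - x = 0 then (k:ℂ) else -1)
        = ((k:ℂ)+1)^2 * ((if x = 0 then (1:ℂ) else 0) * (if d - x = 0 then (1:ℂ) else 0))
          - ((k:ℂ)+1) * (if x = 0 then (1:ℂ) else 0)
          - ((k:ℂ)+1) * (if d - x = 0 then (1:ℂ) else 0) + 1 := by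
    intro x; split <;> split <;> ring
  simp only [expand]
  rw [Finset.sum_add_distrib, Finset.sum_sub_distrib, Finset.sum_sub_distrib,
    ← Finset.mul_sum, ← Finset.mul_sum, ← Finset.mul_sum]
  have h1 : ∑ x : ZMod (k+1), (if x = 0 then (1:ℂ) else 0) = 1 := by
    rw [Finset.sum_ite_eq']; simp
  have h2 : ∑ x : ZMod (k+1), (if d - x = 0 then (1:ℂ) else 0) = 1 := by
    simp only [sub_eq_zero]
    rw [Finset.sum_ite_eq]; simp
  have h3 : ∑ x : ZMod (k+1), ((if x = 0 then (1:ℂ) else 0) * (if d - x = 0 then (1:ℂ) else 0))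
      = (if d = 0 then (1:ℂ) else 0) := by
    simp only [ite_mul, one_mul, zero_mul]
    rw [Finset.sum_ite_eq']
    simp
  have h4 : ∑ _x : ZMod (k+1), (1:ℂ) = (k:ℂ)+1 := by
    rw [Finset.sum_const, Finset.card_univ, ZMod.card]; push_cast; ring
  rw [h1, h2, h3, h4]
  by_cases h : d = 0 <;> simp [h] <;> ring

theorem stmt18 {k q : ℕ} (hk : 0 < k) (hq : 0 < q)
    (C : Matrix (Fin (q*(k+1))) (Fin (q*(k+1))) ℂ)
    (hC : C = circ (fun j => if (k+1) ∣ (j : ℕ) then (k : ℂ) else -1)) :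
    C * C = ((q*(k+1) : ℕ) : ℂ) • C ∧
    IsMP C ((1/((q*(k+1) : ℕ) : ℂ)^2) • C) := by
  set N : ℂ := ((q*(k+1) : ℕ) : ℂ) with hN
  have hn0 : N ≠ 0 := by
    rw [hN]
    exact_mod_cast Nat.cast_ne_zero.2 (Nat.mul_pos hq k.succ_pos).ne'
  have hent : ∀ i j : Fin (q*(k+1)), C i j
      = (if ((j:ℕ):ZMod (k+1)) - ((i:ℕ):ZMod (k+1)) = 0 then (k:ℂ) else -1) := by
    intro i j
    rw [hC]
    show (if (k+1) ∣ (((j - i : Fin (q*(k+1))):ℕ)) then (k:ℂ) else -1) = _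
    simp only [← ZMod.natCast_eq_zero_iff, psi_sub]
  have hmul : C * C = N • C := by
    ext i j
    rw [Matrix.mul_apply, Matrix.smul_apply, smul_eq_mul]
    have step1 : ∑ s, C i s * C s j
        = ∑ s : Fin (q*(k+1)), (fun x : ZMod (k+1) =>
            (if x - ((i:ℕ):ZMod (k+1)) = 0 then (k:ℂ) else -1) *
            (if ((j:ℕ):ZMod (k+1)) - x = 0 then (k:ℂ) else -1)) (((s:ℕ):ZMod (k+1))) := by
      refine Finset.sum_congr rfl fun s _ => ?_
      rw [hent i s, hent s j]
    have stepf := sum_fiber (k:=k) (q:=q) (fun x : ZMod (k+1) =>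
      (if x - ((i:ℕ):ZMod (k+1)) = 0 then (k:ℂ) else -1) *
      (if ((j:ℕ):ZMod (k+1)) - x = 0 then (k:ℂ) else -1))
    rw [step1, stepf]
    set u : ZMod (k+1) := ((i:ℕ):ZMod (k+1))
    set v : ZMod (k+1) := ((j:ℕ):ZMod (k+1))
    have step2 : ∑ x : ZMod (k+1),
        (if x - u = 0 then (k:ℂ) else -1) * (if v - x = 0 then (k:ℂ) else -1)
        = ∑ x : ZMod (k+1),
        (if x = 0 then (k:ℂ) else -1) * (if (v - u) - x = 0 then (k:ℂ) else -1) := by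
      rw [← Equiv.sum_comp (Equiv.addRight u) (fun x =>
        (if x - u = 0 then (k:ℂ) else -1) * (if v - x = 0 then (k:ℂ) else -1))]
      refine Finset.sum_congr rfl fun x _ => ?_
      simp only [Equiv.coe_addRight]
      congr 2
      · rw [add_sub_cancel_right]
      · ring
    rw [step2, conv_sum, hent i j]
    rw [hN]
    push_cast
    ring
  have hherm : Cᴴ = C := by
    ext i j
    rw [Matrix.conjTranspose_apply, hent j i, hent i j]
    have hc : (((i:ℕ):ZMod (k+1)) - ((j:ℕ):ZMod (k+1)) = 0)
        ↔ (((j:ℕ):ZMod (k+1)) - ((i:ℕ):ZMod (k+1)) = 0) := by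
      rw [sub_eq_zero, sub_eq_zero]; exact eq_comm
    by_cases h : ((j:ℕ):ZMod (k+1)) - ((i:ℕ):ZMod (k+1)) = 0
    · rw [if_pos h, if_pos (hc.2 h)]; exact Complex.conj_natCast k
    · rw [if_neg h, if_neg (fun hh => h (hc.1 hh))]; simp
  have hAX : C * ((1/N^2) • C) = (1/N) • C := by
    rw [Matrix.mul_smul, hmul, smul_smul]
    congr 1
    field_simp
  have hXA : ((1/N^2) • C) * C = (1/N) • C := by
    rw [Matrix.smul_mul, hmul, smul_smul]
    congr 1
    field_simp
  refine ⟨hmul, ?_, ?_, ?_, ?_⟩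
  · rw [hAX, Matrix.smul_mul, hmul, smul_smul]
    rw [show (1/N) * N = 1 by field_simp, one_smul]
  · rw [hXA, Matrix.smul_mul, Matrix.mul_smul, hmul, smul_smul, smul_smul]
    congr 1
    field_simp
  · rw [hAX, Matrix.conjTranspose_smul, hherm]
    congr 1
    rw [hN]
    simp
  · rw [hXA, Matrix.conjTranspose_smul, hherm]
    congr 1
    rw [hN]
    simp
end
end

section
/- Let n ≥ 5 be odd and let D be the n×n distance matrix of the wheel graph W(n) with center labeled 1 and rim vertices 2,...,n, so that D = [[0, eᵗ],[e, circ(u)]] with u = (0,1,2,...,2,1) ∈ ℝ^{n−1}. Let a = (0,−1,1,...,−1,1) ∈ ℝⁿ. Then the null space of D is span{a}, and D† = (D + a aᵗ)^{-1} − (1/(n−1)²) a aᵗ. -/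
noncomputable section
open Matrix

/-- `X` is the Moore–Penrose inverse of the real matrix `A`. -/
def IsMPR {m n : ℕ} (A : Matrix (Fin m) (Fin n) ℝ) (X : Matrix (Fin n) (Fin m) ℝ) : Prop :=
  A * X * A = A ∧ X * A * X = X ∧ (A * X)ᵀ = A * X ∧ (X * A)ᵀ = X * A

section WheelAux

variable {n : ℕ} [NeZero n]

def wheelD (n : ℕ) : Matrix (Fin n) (Fin n) ℝ :=
  Matrix.of fun i j : Fin n =>
      if i = j then 0
      else if (i : ℕ) = 0 ∨ (j : ℕ) = 0 then 1
      else if (i : ℕ) + 1 = (j : ℕ) ∨ (j : ℕ) + 1 = (i : ℕ) ∨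
        ((i : ℕ) = 1 ∧ (j : ℕ) = n - 1) ∨ ((j : ℕ) = 1 ∧ (i : ℕ) = n - 1) then 1 else 2

omit [NeZero n] in
lemma fin_eq_iff (x y : Fin n) : x = y ↔ ((x:ℕ) = (y:ℕ)) := Fin.ext_iff

lemma row0 (hn : 5 ≤ n) (v : Fin n → ℝ) :
    (wheelD n).mulVec v 0 = (∑ j, v j) - v 0 := by
  have h0 : ((0 : Fin n) : ℕ) = 0 := by simp
  have step : ∀ j : Fin n, wheelD n 0 j * v j = v j - (if j = 0 then v 0 else 0) := by
    intro j
    simp only [wheelD, of_apply]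
    by_cases hj : j = 0
    · subst hj; rw [if_pos rfl, if_pos rfl]; ring
    · have hj' : (j : ℕ) ≠ 0 := by rw [fin_eq_iff, h0] at hj; exact hj
      rw [if_neg (by rw [fin_eq_iff]; omega), if_pos (by omega), if_neg hj]
      ring
  simp only [Matrix.mulVec, dotProduct]
  rw [Finset.sum_congr rfl (fun j _ => step j), Finset.sum_sub_distrib]
  simp [Finset.sum_ite_eq']

lemma rowi (hn : 5 ≤ n) (v : Fin n → ℝ) (i : Fin n) (hi : (i : ℕ) ≠ 0)
    (p q : Fin n) (hp : (p : ℕ) = if (i : ℕ) = 1 then n - 1 else (i : ℕ) - 1)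
    (hq : (q : ℕ) = if (i : ℕ) = n - 1 then 1 else (i : ℕ) + 1) :
    (wheelD n).mulVec v i = 2 * (∑ j, v j) - v 0 - 2 * v i - v p - v q := by
  have hiv : (i : ℕ) < n := i.isLt
  have h0 : ((0 : Fin n) : ℕ) = 0 := by simp
  have hp' : ((i:ℕ) = 1 ∧ (p:ℕ) = n - 1) ∨ ((i:ℕ) ≠ 1 ∧ (p:ℕ) + 1 = (i:ℕ)) := by
    split at hp <;> omega
  have hq' : ((i:ℕ) = n - 1 ∧ (q:ℕ) = 1) ∨ ((i:ℕ) ≠ n - 1 ∧ (q:ℕ) = (i:ℕ) + 1) := by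
    split at hq <;> omega
  clear hp hq
  have hp0 : (p : ℕ) ≠ 0 := by omega
  have hq0 : (q : ℕ) ≠ 0 := by omega
  have hpi : (p : ℕ) ≠ (i : ℕ) := by omega
  have hqi : (q : ℕ) ≠ (i : ℕ) := by omega
  have hpq : (p : ℕ) ≠ (q : ℕ) := by omega
  have step : ∀ j : Fin n, wheelD n i j * v j
      = 2 * v j - (if j = 0 then v 0 else 0) - 2 * (if j = i then v i else 0)
        - (if j = p then v p else 0) - (if j = q then v q else 0) := by
    intro j
    have hjv : (j : ℕ) < n := j.isLt
    by_cases hj0 : (j : ℕ) = 0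
    · have hval : wheelD n i j = 1 := by
        simp only [wheelD, of_apply]
        rw [if_neg (by rw [fin_eq_iff]; omega), if_pos (by omega)]
      rw [hval, if_pos (by rw [fin_eq_iff]; omega), if_neg (by rw [fin_eq_iff]; omega),
        if_neg (by rw [fin_eq_iff]; omega), if_neg (by rw [fin_eq_iff]; omega),
        show v j = v 0 from by congr 1; rw [fin_eq_iff]; omega]
      ring
    · by_cases hji : (j : ℕ) = (i : ℕ)
      · have hval : wheelD n i j = 0 := by
          simp only [wheelD, of_apply]
          rw [if_pos (by rw [fin_eq_iff]; omega)]
        rw [hval, if_neg (by rw [fin_eq_iff]; omega), if_pos (by rw [fin_eq_iff]; omega),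
          if_neg (by rw [fin_eq_iff]; omega), if_neg (by rw [fin_eq_iff]; omega),
          show v j = v i from by congr 1; rw [fin_eq_iff]; omega]
        ring
      · by_cases hjp : (j : ℕ) = (p : ℕ)
        · have hval : wheelD n i j = 1 := by
            simp only [wheelD, of_apply]
            rw [if_neg (by rw [fin_eq_iff]; omega), if_neg (by omega), if_pos (by omega)]
          rw [hval, if_neg (by rw [fin_eq_iff]; omega), if_neg (by rw [fin_eq_iff]; omega),
            if_pos (by rw [fin_eq_iff]; omega), if_neg (by rw [fin_eq_iff]; omega),
            show v j = v p from by congr 1; rw [fin_eq_iff]; omega]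
          ring
        · by_cases hjq : (j : ℕ) = (q : ℕ)
          · have hval : wheelD n i j = 1 := by
              simp only [wheelD, of_apply]
              rw [if_neg (by rw [fin_eq_iff]; omega), if_neg (by omega), if_pos (by omega)]
            rw [hval, if_neg (by rw [fin_eq_iff]; omega), if_neg (by rw [fin_eq_iff]; omega),
              if_neg (by rw [fin_eq_iff]; omega), if_pos (by rw [fin_eq_iff]; omega),
              show v j = v q from by congr 1; rw [fin_eq_iff]; omega]
            ring
          · have hval : wheelD n i j = 2 := by
              simp only [wheelD, of_apply]
              rw [if_neg (by rw [fin_eq_iff]; omega), if_neg (by omega), if_neg (by omega)]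
            rw [hval, if_neg (by rw [fin_eq_iff]; omega), if_neg (by rw [fin_eq_iff]; omega),
              if_neg (by rw [fin_eq_iff]; omega), if_neg (by rw [fin_eq_iff]; omega)]
            ring
  simp only [Matrix.mulVec, dotProduct]
  rw [Finset.sum_congr rfl (fun j _ => step j)]
  simp only [Finset.sum_sub_distrib, ← Finset.mul_sum]
  simp [Finset.sum_ite_eq']

def wheelA (n : ℕ) : Fin n → ℝ := fun j => if (j : ℕ) = 0 then 0 else (-1 : ℝ)^(j : ℕ)

omit [NeZero n] in
lemma asum (hodd : Odd n) : ∑ j : Fin n, wheelA n j = 0 := by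
  have : ∑ j : Fin n, wheelA n j
      = ∑ k ∈ Finset.range n, (fun k : ℕ => if k = 0 then (0:ℝ) else (-1:ℝ)^k) k := by
    rw [← Fin.sum_univ_eq_sum_range (fun k : ℕ => if k = 0 then (0:ℝ) else (-1:ℝ)^k) n]
    exact Finset.sum_congr rfl (fun j _ => by simp [wheelA])
  rw [this]
  have h2 : ∀ k : ℕ, (if k = 0 then (0:ℝ) else (-1:ℝ)^k)
      = (-1:ℝ)^k - (if k = 0 then (1:ℝ) else 0) := by
    intro k; by_cases hk : k = 0 <;> simp [hk]
  rw [Finset.sum_congr rfl (fun k _ => h2 k), Finset.sum_sub_distrib, neg_one_geom_sum,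
    Finset.sum_ite_eq' (Finset.range n) 0 (fun _ => (1:ℝ))]
  have : ¬ Even n := Nat.not_even_iff_odd.mpr hodd
  have h0 : 0 < n := hodd.pos
  simp [this, Finset.mem_range.mpr h0]

omit [NeZero n] in
lemma asq (hn : 5 ≤ n) : ∑ j : Fin n, wheelA n j * wheelA n j = (n : ℝ) - 1 := by
  have : ∑ j : Fin n, wheelA n j * wheelA n j
      = ∑ k ∈ Finset.range n, (fun k : ℕ => if k = 0 then (0:ℝ) else 1) k := by
    rw [← Fin.sum_univ_eq_sum_range (fun k : ℕ => if k = 0 then (0:ℝ) else 1) n]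
    apply Finset.sum_congr rfl
    intro j _
    by_cases hj : (j:ℕ) = 0 <;> simp [wheelA, hj, ← mul_pow]
  rw [this]
  have h2 : ∀ k : ℕ, (if k = 0 then (0:ℝ) else 1) = 1 - (if k = 0 then (1:ℝ) else 0) := by
    intro k; by_cases hk : k = 0 <;> simp [hk]
  rw [Finset.sum_congr rfl (fun k _ => h2 k), Finset.sum_sub_distrib,
    Finset.sum_ite_eq' (Finset.range n) 0 (fun _ => (1:ℝ))]
  simp [Finset.mem_range.mpr (by omega : 0 < n)]

omit [NeZero n] in
lemma pow_pq (hn : 5 ≤ n) (hodd : Odd n) (i pn qn : ℕ) (hi : 1 ≤ i) (hiv : i < n)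
    (hp : pn = if i = 1 then n - 1 else i - 1) (hq : qn = if i = n - 1 then 1 else i + 1) :
    (-1:ℝ)^pn + (-1:ℝ)^qn = -2 * (-1:ℝ)^i := by
  obtain ⟨m, hm⟩ := hodd
  by_cases h1 : i = 1
  · have hpn : pn = 2 * m := by rw [hp, if_pos h1]; omega
    have hqn : qn = 2 := by rw [hq]; split <;> omega
    subst h1
    rw [hpn, hqn, pow_mul]
    norm_num
  · by_cases h2 : i = n - 1
    · have hpn : pn = 2 * (m - 1) + 1 := by rw [hp, if_neg h1]; omega
      have hqn : qn = 1 := by rw [hq, if_pos h2]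
      have hin : i = 2 * m := by omega
      rw [hpn, hqn, hin, pow_succ, pow_mul, pow_mul]
      norm_num
    · have hpn : pn = i - 1 := by rw [hp, if_neg h1]
      have hqn : qn = i + 1 := by rw [hq, if_neg h2]
      obtain ⟨k, hk⟩ : ∃ k, i = k + 1 := ⟨i - 1, by omega⟩
      subst hk
      rw [hpn, hqn, show k + 1 - 1 = k by omega, pow_succ, pow_succ]
      ring

lemma hDa (hn : 5 ≤ n) (hodd : Odd n) : (wheelD n).mulVec (wheelA n) = 0 := by
  have h0 : ((0 : Fin n) : ℕ) = 0 := by simp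
  have ha0 : wheelA n 0 = 0 := by simp [wheelA, h0]
  funext i
  by_cases hi : (i : ℕ) = 0
  · have : i = 0 := by rw [fin_eq_iff]; omega
    subst this
    rw [row0 hn, asum hodd, ha0]
    simp
  · have hiv : (i : ℕ) < n := i.isLt
    obtain ⟨p, hp⟩ : ∃ p : Fin n, (p:ℕ) = if (i:ℕ) = 1 then n - 1 else (i:ℕ) - 1 :=
      ⟨⟨if (i:ℕ) = 1 then n - 1 else (i:ℕ) - 1, by split <;> omega⟩, rfl⟩
    obtain ⟨q, hq⟩ : ∃ q : Fin n, (q:ℕ) = if (i:ℕ) = n - 1 then 1 else (i:ℕ) + 1 :=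
      ⟨⟨if (i:ℕ) = n - 1 then 1 else (i:ℕ) + 1, by split <;> omega⟩, rfl⟩
    rw [rowi hn _ i hi p q hp hq, asum hodd, ha0]
    have hai : wheelA n i = (-1:ℝ)^(i:ℕ) := by simp [wheelA, hi]
    have hap : wheelA n p = (-1:ℝ)^(p:ℕ) := by
      simp only [wheelA]; rw [if_neg (by rw [hp]; split <;> omega)]
    have haq : wheelA n q = (-1:ℝ)^(q:ℕ) := by
      simp only [wheelA]; rw [if_neg (by rw [hq]; split <;> omega)]
    rw [hai, hap, haq]
    have key := pow_pq hn hodd (i:ℕ) (p:ℕ) (q:ℕ) (by omega) hiv hp hq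
    simp only [Pi.zero_apply]
    linarith [key]

omit [NeZero n] in
lemma hDsymm : (wheelD n)ᵀ = wheelD n := by
  ext i j
  simp only [wheelD, transpose_apply, of_apply]
  by_cases h1 : i = j
  · subst h1; rfl
  · rw [if_neg (fun h => h1 h.symm), if_neg h1]
    by_cases h2 : (i : ℕ) = 0 ∨ (j : ℕ) = 0
    · rw [if_pos (Or.symm h2), if_pos h2]
    · rw [if_neg (fun h => h2 (Or.symm h)), if_neg h2]
      by_cases h3 : (j:ℕ) + 1 = (i:ℕ) ∨ (i:ℕ) + 1 = (j:ℕ) ∨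
          ((j:ℕ) = 1 ∧ (i:ℕ) = n - 1) ∨ ((i:ℕ) = 1 ∧ (j:ℕ) = n - 1)
      · rw [if_pos h3, if_pos (by tauto)]
      · rw [if_neg h3, if_neg (by tauto)]

lemma ker_wheel (hn : 5 ≤ n) (hodd : Odd n) (v : Fin n → ℝ)
    (hv : (wheelD n).mulVec v = 0) : ∃ t : ℝ, v = t • wheelA n := by
  have h0 : ((0 : Fin n) : ℕ) = 0 := by simp
  -- natural-index view of v
  set V : ℕ → ℝ := fun k => if h : k < n then v ⟨k, h⟩ else 0 with hVdef
  have hVk : ∀ (k : ℕ) (h : k < n), V k = v ⟨k, h⟩ := fun k h => dif_pos h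
  have hT : ∑ j, v j = v 0 := by
    have := congrFun hv 0
    rw [row0 hn v] at this
    simp only [Pi.zero_apply] at this
    linarith
  have rim : ∀ (i p q : Fin n), (i:ℕ) ≠ 0 →
      ((p:ℕ) = if (i:ℕ) = 1 then n - 1 else (i:ℕ) - 1) →
      ((q:ℕ) = if (i:ℕ) = n - 1 then 1 else (i:ℕ) + 1) →
      v 0 = 2 * v i + v p + v q := by
    intro i p q hi hp hq
    have := congrFun hv i
    rw [rowi hn v i hi p q hp hq, hT] at this
    simp only [Pi.zero_apply] at this
    linarith
  have rimN : ∀ k, 2 ≤ k → k ≤ n - 2 → v 0 = 2 * V k + V (k-1) + V (k+1) := by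
    intro k h2 h3
    have := rim ⟨k, by omega⟩ ⟨k-1, by omega⟩ ⟨k+1, by omega⟩ (by simp only []; omega)
      (by show k - 1 = if k = 1 then n - 1 else k - 1; rw [if_neg (by omega)])
      (by show k + 1 = if k = n - 1 then 1 else k + 1; rw [if_neg (by omega)])
    rw [hVk k (by omega), hVk (k-1) (by omega), hVk (k+1) (by omega)]
    exact this
  have rim1 : v 0 = 2 * V 1 + V (n-1) + V 2 := by
    have := rim ⟨1, by omega⟩ ⟨n-1, by omega⟩ ⟨2, by omega⟩ (by simp only []; omega)
      (by show n - 1 = if 1 = 1 then n - 1 else 1 - 1; rw [if_pos rfl])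
      (by show 2 = if 1 = n - 1 then 1 else 1 + 1; rw [if_neg (by omega)])
    rw [hVk 1 (by omega), hVk (n-1) (by omega), hVk 2 (by omega)]
    exact this
  set c : ℝ := v 0 / 4 with hc
  set B : ℝ := V 1 + V 2 - 2 * c with hB
  set A : ℝ := V 2 - c - 2 * B with hA
  have h4c : v 0 = 4 * c := by rw [hc]; ring
  have key : ∀ k, 1 ≤ k → k ≤ n - 1 → V k = c + (-1:ℝ)^k * (A + B * k) := by
    intro k
    induction k using Nat.strong_induction_on with
    | _ k ih =>
      intro hk1 hk2
      by_cases he1 : k = 1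
      · subst he1; rw [hA, hB]; push_cast; ring
      · by_cases he2 : k = 2
        · subst he2; rw [hA, hB]; push_cast; ring
        · obtain ⟨m, hm⟩ : ∃ m, k = m + 2 := ⟨k - 2, by omega⟩
          subst hm
          have ih1 := ih (m+1) (by omega) (by omega) (by omega)
          have ih0 := ih m (by omega) (by omega) (by omega)
          have eq1 := rimN (m+1) (by omega) (by omega)
          rw [show (m+1) - 1 = m from by omega, show (m+1) + 1 = m + 2 from rfl] at eq1
          push_cast at ih1 ih0 ⊢
          linear_combination h4c - eq1 - 2 * ih1 - ih0
  have hEven : Even (n - 1) := Nat.Odd.sub_odd hodd odd_one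
  have hcast : ((n - 1 : ℕ) : ℝ) = (n : ℝ) - 1 := by
    have : (1:ℕ) ≤ n := by omega
    push_cast [Nat.cast_sub this]
    ring
  have hBzero : B = 0 := by
    have k1 := key 1 (by omega) (by omega)
    have k2 := key 2 (by omega) (by omega)
    have kn := key (n-1) (by omega) (by omega)
    rw [hEven.neg_one_pow, hcast] at kn
    push_cast at k1 k2
    have hmul : B * ((n:ℝ) - 1) = 0 := by
      linear_combination h4c - rim1 - 2 * k1 - k2 - kn
    have hne : (n:ℝ) - 1 ≠ 0 := by
      have : (5:ℝ) ≤ (n:ℝ) := by exact_mod_cast hn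
      linarith
    rcases mul_eq_zero.mp hmul with h | h
    · exact h
    · exact absurd h hne
  have key' : ∀ k, 1 ≤ k → k ≤ n - 1 → V k = c + (-1:ℝ)^k * A := by
    intro k h1 h2
    rw [key k h1 h2, hBzero]
    ring
  have hczero : c = 0 := by
    have e1 : ∑ j, v j = ∑ k ∈ Finset.range n, V k := by
      rw [← Fin.sum_univ_eq_sum_range V n]
      exact Finset.sum_congr rfl fun j _ => (hVk j.val j.isLt).symm
    have e2 : ∀ k ∈ Finset.range (n-1), V (k+1) = c + (-1:ℝ)^(k+1) * A := by
      intro k hk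
      rw [Finset.mem_range] at hk
      exact key' (k+1) (by omega) (by omega)
    have e3 : ∑ k ∈ Finset.range (n-1), V (k+1) = ((n:ℝ) - 1) * c := by
      rw [Finset.sum_congr rfl e2, Finset.sum_add_distrib, Finset.sum_const, Finset.card_range,
        nsmul_eq_mul, hcast]
      have h5 : ∀ k, (-1:ℝ)^(k+1) * A = (-A) * (-1:ℝ)^k := fun k => by rw [pow_succ]; ring
      rw [Finset.sum_congr rfl fun k _ => h5 k, ← Finset.mul_sum, neg_one_geom_sum, if_pos hEven]
      ring
    have e4 : ∑ k ∈ Finset.range n, V k = V 0 + ((n:ℝ)-1)*c := by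
      have hrw : Finset.range n = Finset.range ((n-1)+1) := by congr 1; omega
      rw [hrw, Finset.sum_range_succ', e3]
      ring
    have hv00 : V 0 = v 0 := by
      rw [hVk 0 (by omega)]
      congr 1
    have hfin : v 0 = v 0 + ((n:ℝ)-1)*c := by
      rw [← e1, hT, hv00] at e4
      exact e4
    have hne : (n:ℝ) - 1 ≠ 0 := by
      have : (5:ℝ) ≤ (n:ℝ) := by exact_mod_cast hn
      linarith
    have : ((n:ℝ) - 1) * c = 0 := by linarith
    rcases mul_eq_zero.mp this with h | h
    · exact absurd h hne
    · exact h
  refine ⟨A, funext fun j => ?_⟩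
  simp only [Pi.smul_apply, smul_eq_mul, wheelA]
  by_cases hj : (j : ℕ) = 0
  · have : j = 0 := by rw [fin_eq_iff]; omega
    subst this
    rw [if_pos h0, h4c, hczero]
    ring
  · rw [if_neg hj]
    have := key' (j:ℕ) (by omega) (by omega : (j:ℕ) ≤ n - 1)
    rw [hVk (j:ℕ) j.isLt] at this
    have hjj : (⟨(j:ℕ), j.isLt⟩ : Fin n) = j := by rw [fin_eq_iff]
    rw [hjj] at this
    rw [this, hczero]
    ring

omit [NeZero n] in
lemma hDsym' : ∀ k j : Fin n, wheelD n k j = wheelD n j k := by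
  intro k j
  conv_lhs => rw [hDsymm.symm]
  exact transpose_apply _ k j

omit [NeZero n] in
lemma hDAA (hn : 5 ≤ n) (hodd : Odd n) [NeZero n] :
    wheelD n * vecMulVec (wheelA n) (wheelA n) = 0 := by
  ext i j
  simp only [Matrix.mul_apply, vecMulVec_apply, Matrix.zero_apply]
  have : ∀ k : Fin n, wheelD n i k * (wheelA n k * wheelA n j)
      = (wheelD n i k * wheelA n k) * wheelA n j := fun k => by ring
  rw [Finset.sum_congr rfl fun k _ => this k, ← Finset.sum_mul]
  have h2 : ∑ k, wheelD n i k * wheelA n k = 0 := by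
    have := congrFun (hDa hn hodd) i
    simpa [Matrix.mulVec, dotProduct] using this
  rw [h2, zero_mul]

omit [NeZero n] in
lemma hAAsymm : (vecMulVec (wheelA n) (wheelA n))ᵀ = vecMulVec (wheelA n) (wheelA n) := by
  ext i j
  simp only [transpose_apply, vecMulVec_apply]
  ring

omit [NeZero n] in
lemma hAAD (hn : 5 ≤ n) (hodd : Odd n) [NeZero n] :
    vecMulVec (wheelA n) (wheelA n) * wheelD n = 0 := by
  have := congrArg Matrix.transpose (hDAA hn hodd (n := n))
  rwa [Matrix.transpose_mul, hAAsymm, hDsymm, Matrix.transpose_zero] at this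

omit [NeZero n] in
lemma hAAAA (hn : 5 ≤ n) :
    vecMulVec (wheelA n) (wheelA n) * vecMulVec (wheelA n) (wheelA n)
      = ((n:ℝ) - 1) • vecMulVec (wheelA n) (wheelA n) := by
  ext i j
  simp only [Matrix.mul_apply, vecMulVec_apply, Matrix.smul_apply, smul_eq_mul]
  have : ∀ k : Fin n, (wheelA n i * wheelA n k) * (wheelA n k * wheelA n j)
      = (wheelA n k * wheelA n k) * (wheelA n i * wheelA n j) := fun k => by ring
  rw [Finset.sum_congr rfl fun k _ => this k, ← Finset.sum_mul, asq hn]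

lemma hMker (hn : 5 ≤ n) (hodd : Odd n) (w : Fin n → ℝ)
    (hw : (wheelD n + vecMulVec (wheelA n) (wheelA n)) *ᵥ w = 0) : w = 0 := by
  set a := wheelA n
  set s : ℝ := ∑ k, a k * w k with hs
  have hAAw : ∀ i, (vecMulVec a a *ᵥ w) i = a i * s := by
    intro i
    simp only [Matrix.mulVec, dotProduct, vecMulVec_apply, hs]
    rw [Finset.mul_sum]
    exact Finset.sum_congr rfl fun k _ => by ring
  have hDw_eq : ∀ i, (wheelD n *ᵥ w) i = - (a i * s) := by
    intro i
    have := congrFun hw i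
    rw [Matrix.add_mulVec] at this
    simp only [Pi.add_apply, Pi.zero_apply] at this
    rw [hAAw i] at this
    linarith
  -- dot with a kills the D part
  have haDw : ∑ i, a i * (wheelD n *ᵥ w) i = 0 := by
    have swap : ∑ i, a i * (wheelD n *ᵥ w) i = ∑ k, (wheelD n *ᵥ a) k * w k := by
      simp only [Matrix.mulVec, dotProduct, Finset.mul_sum, Finset.sum_mul]
      rw [Finset.sum_comm]
      apply Finset.sum_congr rfl
      intro k _
      apply Finset.sum_congr rfl
      intro i _
      rw [hDsym' i k]
      ring
    rw [swap, hDa hn hodd]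
    simp
  have hs0 : s = 0 := by
    have h1 : ∑ i, a i * (wheelD n *ᵥ w) i = - (s * ((n:ℝ) - 1)) := by
      rw [Finset.sum_congr rfl fun i (_ : i ∈ Finset.univ) => by rw [hDw_eq i]]
      have : ∀ i : Fin n, a i * -(a i * s) = -(s * (a i * a i)) := fun i => by ring
      rw [Finset.sum_congr rfl fun i _ => this i, Finset.sum_neg_distrib, ← Finset.mul_sum]
      rw [show (∑ i, a i * a i) = (n:ℝ) - 1 from asq hn]
    rw [haDw] at h1
    have hne : (n:ℝ) - 1 ≠ 0 := by
      have : (5:ℝ) ≤ (n:ℝ) := by exact_mod_cast hn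
      linarith
    have := h1.symm
    have hmul : s * ((n:ℝ) - 1) = 0 := by linarith
    rcases mul_eq_zero.mp hmul with h | h
    · exact h
    · exact absurd h hne
  have hDw0 : wheelD n *ᵥ w = 0 := by
    funext i
    rw [hDw_eq i, hs0]
    simp
  obtain ⟨t, ht⟩ := ker_wheel hn hodd w hDw0
  have hta : s = t * ((n:ℝ) - 1) := by
    rw [hs, ht]
    simp only [Pi.smul_apply, smul_eq_mul]
    have : ∀ k : Fin n, a k * (t * a k) = t * (a k * a k) := fun k => by ring
    rw [Finset.sum_congr rfl fun k _ => this k, ← Finset.mul_sum,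
      show (∑ k, a k * a k) = (n:ℝ) - 1 from asq hn]
  have ht0 : t = 0 := by
    rw [hs0] at hta
    have hne : (n:ℝ) - 1 ≠ 0 := by
      have : (5:ℝ) ≤ (n:ℝ) := by exact_mod_cast hn
      linarith
    rcases mul_eq_zero.mp hta.symm with h | h
    · exact h
    · exact absurd h hne
  rw [ht, ht0, zero_smul]

lemma hMunit (hn : 5 ≤ n) (hodd : Odd n) :
    IsUnit (wheelD n + vecMulVec (wheelA n) (wheelA n)) := by
  rw [← Matrix.mulVec_injective_iff_isUnit]
  intro x y hxy
  have h : (wheelD n + vecMulVec (wheelA n) (wheelA n)) *ᵥ (x - y) = 0 := by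
    rw [Matrix.mulVec_sub, hxy, sub_self]
  have := hMker hn hodd (x - y) h
  exact sub_eq_zero.mp this

omit [NeZero n] in
lemma IsMPR_unique {A X Y : Matrix (Fin n) (Fin n) ℝ}
    (hX : IsMPR A X) (hY : IsMPR A Y) : X = Y := by
  obtain ⟨hx1, hx2, hx3, hx4⟩ := hX
  obtain ⟨hy1, hy2, hy3, hy4⟩ := hY
  have e1 : X = X * A * Y := by
    calc X = X * A * X := hx2.symm
    _ = X * (A * X) := by rw [mul_assoc]
    _ = X * (A * X)ᵀ := by rw [hx3]
    _ = X * ((A * Y * A) * X)ᵀ := by rw [hy1]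
    _ = X * ((A * Y) * (A * X))ᵀ := by simp only [mul_assoc]
    _ = X * ((A * X)ᵀ * (A * Y)ᵀ) := by rw [transpose_mul]
    _ = X * ((A * X) * (A * Y)) := by rw [hx3, hy3]
    _ = X * A * X * (A * Y) := by simp only [mul_assoc]
    _ = X * (A * Y) := by rw [hx2]
    _ = X * A * Y := by rw [mul_assoc]
  have e2 : Y = X * A * Y := by
    calc Y = Y * A * Y := hy2.symm
    _ = (Y * A)ᵀ * Y := by rw [hy4]
    _ = (Y * (A * X * A))ᵀ * Y := by rw [hx1]
    _ = ((Y * A) * (X * A))ᵀ * Y := by simp only [mul_assoc]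
    _ = ((X * A)ᵀ * (Y * A)ᵀ) * Y := by rw [transpose_mul]
    _ = ((X * A) * (Y * A)) * Y := by rw [hx4, hy4]
    _ = (X * A) * (Y * A * Y) := by simp only [mul_assoc]
    _ = (X * A) * Y := by rw [hy2]
    _ = X * A * Y := by rw [mul_assoc]
  rw [e1, ← e2]

lemma final_piece (hn : 5 ≤ n) (hodd : Odd n) :
    IsMPR (wheelD n)
      ((wheelD n + vecMulVec (wheelA n) (wheelA n))⁻¹
        - (1/((n : ℝ)-1)^2) • vecMulVec (wheelA n) (wheelA n)) := by
  set a := wheelA n with ha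
  set AA := vecMulVec a a with hAAdef
  set M := wheelD n + AA with hM
  set k : ℝ := 1/((n : ℝ)-1)^2 with hk
  have hne : (n:ℝ) - 1 ≠ 0 := by
    have : (5:ℝ) ≤ (n:ℝ) := by exact_mod_cast hn
    linarith
  have hdet : IsUnit M.det := (Matrix.isUnit_iff_isUnit_det M).mp (hMunit hn hodd)
  have hM1 : M * M⁻¹ = 1 := Matrix.mul_nonsing_inv M hdet
  have hM2 : M⁻¹ * M = 1 := Matrix.nonsing_inv_mul M hdet
  have hMAA : M * AA = ((n:ℝ)-1) • AA := by
    rw [hM, Matrix.add_mul, hDAA hn hodd, hAAAA hn, zero_add]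
  have hAAM : AA * M = ((n:ℝ)-1) • AA := by
    rw [hM, Matrix.mul_add, hAAD hn hodd, hAAAA hn, zero_add]
  have hMinvAA : M⁻¹ * AA = ((n:ℝ)-1)⁻¹ • AA := by
    have h1 : M⁻¹ * (M * AA) = M⁻¹ * (((n:ℝ)-1) • AA) := by rw [hMAA]
    rw [← mul_assoc, hM2, one_mul, Matrix.mul_smul] at h1
    have h2 : ((n:ℝ)-1)⁻¹ • AA = M⁻¹ * AA := by
      conv_lhs => rw [h1]
      rw [smul_smul, inv_mul_cancel₀ hne, one_smul]
    exact h2.symm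
  have hAAMinv : AA * M⁻¹ = ((n:ℝ)-1)⁻¹ • AA := by
    have h1 : (AA * M) * M⁻¹ = (((n:ℝ)-1) • AA) * M⁻¹ := by rw [hAAM]
    rw [mul_assoc, hM1, mul_one, Matrix.smul_mul] at h1
    have h2 : ((n:ℝ)-1)⁻¹ • AA = AA * M⁻¹ := by
      conv_lhs => rw [h1]
      rw [smul_smul, inv_mul_cancel₀ hne, one_smul]
    exact h2.symm
  have hD_eq : wheelD n = M - AA := by rw [hM, add_sub_cancel_right]
  set Y := M⁻¹ - k • AA with hY
  have hDY : wheelD n * Y = 1 - ((n:ℝ)-1)⁻¹ • AA := by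
    rw [hD_eq, hY, Matrix.sub_mul, Matrix.mul_sub, Matrix.mul_sub, Matrix.mul_smul,
      Matrix.mul_smul, hM1, hMAA, hAAMinv, hAAAA hn]
    module
  have hYD : Y * wheelD n = 1 - ((n:ℝ)-1)⁻¹ • AA := by
    rw [hD_eq, hY, Matrix.mul_sub, Matrix.sub_mul, Matrix.sub_mul, Matrix.smul_mul,
      Matrix.smul_mul, hM2, hAAM, hMinvAA, hAAAA hn]
    module
  have hAAY : AA * Y = 0 := by
    rw [hY, Matrix.mul_sub, Matrix.mul_smul, hAAMinv, hAAAA hn, smul_smul,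
      show k * ((n:ℝ)-1) = ((n:ℝ)-1)⁻¹ from by rw [hk]; field_simp, sub_self]
  refine ⟨?_, ?_, ?_, ?_⟩
  · rw [hDY, Matrix.sub_mul, one_mul, Matrix.smul_mul, hAAD hn hodd, smul_zero, sub_zero]
  · rw [hYD, Matrix.sub_mul, one_mul, Matrix.smul_mul, hAAY, smul_zero, sub_zero]
  · rw [hDY, Matrix.transpose_sub, Matrix.transpose_one, Matrix.transpose_smul, hAAsymm]
  · rw [hYD, Matrix.transpose_sub, Matrix.transpose_one, Matrix.transpose_smul, hAAsymm]


end WheelAux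

theorem stmt19 {n : ℕ} (hn : 5 ≤ n) (hodd : Odd n)
    (D : Matrix (Fin n) (Fin n) ℝ)
    (hD : D = Matrix.of fun i j : Fin n =>
      if i = j then 0
      else if (i : ℕ) = 0 ∨ (j : ℕ) = 0 then 1
      else if (i : ℕ) + 1 = (j : ℕ) ∨ (j : ℕ) + 1 = (i : ℕ) ∨
        ((i : ℕ) = 1 ∧ (j : ℕ) = n - 1) ∨ ((j : ℕ) = 1 ∧ (i : ℕ) = n - 1) then 1 else 2)
    (a : Fin n → ℝ) (ha : ∀ j, a j = if (j : ℕ) = 0 then 0 else (-1 : ℝ)^(j : ℕ))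
    (X : Matrix (Fin n) (Fin n) ℝ) (hX : IsMPR D X) :
    LinearMap.ker D.mulVecLin = Submodule.span ℝ {a} ∧
    IsUnit (D + vecMulVec a a) ∧
    X = (D + vecMulVec a a)⁻¹ - (1/((n : ℝ)-1)^2) • vecMulVec a a := by
  haveI : NeZero n := ⟨by omega⟩
  have hDw : D = wheelD n := hD
  have haw : a = wheelA n := funext fun j => ha j
  subst hDw haw
  refine ⟨?_, hMunit hn hodd, IsMPR_unique hX (final_piece hn hodd)⟩
  apply le_antisymm
  · intro v hv
    rw [LinearMap.mem_ker, Matrix.mulVecLin_apply] at hv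
    obtain ⟨t, ht⟩ := ker_wheel hn hodd v hv
    exact Submodule.mem_span_singleton.mpr ⟨t, ht.symm⟩
  · rw [Submodule.span_le, Set.singleton_subset_iff]
    rw [SetLike.mem_coe, LinearMap.mem_ker, Matrix.mulVecLin_apply]
    exact hDa hn hodd
end
end
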